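/- arXiv:1406.7345 — 4 statements merged into one kernel-verified Lean document; each statement's English description precedes it below -/
import Mathlib

section
/- If U₀, U₁ ∈ V_P are two maximizers of F_P on V_P (i.e., F_P(V) ≤ F_P(U₀) and F_P(V) ≤ F_P(U₁) for all V ∈ V_P), then U₁ − U₀ is equal a.e. on Λ^N to a real constant. The same statement holds with V_P replaced by V_{ρ^(m)}. -/
open MeasureTheory Real Filter
open scoped ENNReal

set_option linter.unusedSectionVars false
noncomputable section

variable {Λ : Type*} [MeasurableSpace Λ]

/-- The product measure on `Λ^k` (the `k`-fold product of `μ`). -/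
def pm (μ : Measure Λ) (k : ℕ) : Measure (Fin k → Λ) := Measure.pi fun _ => μ

/-- A function on `Λ^k` is symmetric if it is invariant under all permutations
of its variables. -/
def IsSymm' {Λ : Type*} (k : ℕ) (f : (Fin k → Λ) → ℝ) : Prop :=
  ∀ σ : Equiv.Perm (Fin k), ∀ x, f (x ∘ σ) = f x

/-- The `m`-sum `Σ_{1 ≤ i₁ < ⋯ < i_m ≤ N} v(x_{i₁},…,x_{i_m})`. -/
def mSum {Λ : Type*} (N m : ℕ) (v : (Fin m → Λ) → ℝ) (x : Fin N → Λ) : ℝ :=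
  ∑ s ∈ Finset.powersetCard m (Finset.univ : Finset (Fin N)),
    if h : s.card = m then v (fun i => x (s.orderEmbOfFin h i)) else 0

/-- `V` has `m`-sum structure with (symmetric, measurable, real-valued) generator `v`. -/
def HasSumStruct (μ : Measure Λ) (N m : ℕ) (V : (Fin N → Λ) → ℝ)
    (v : (Fin m → Λ) → ℝ) : Prop :=
  IsSymm' m v ∧ Measurable v ∧ V =ᵐ[pm μ N] mSum N m v

/-- The measure `P d^N x`. -/
def Pmeas (μ : Measure Λ) (N : ℕ) (P : (Fin N → Λ) → ℝ) : Measure (Fin N → Λ) :=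
  (pm μ N).withDensity fun x => ENNReal.ofReal (P x)

/-- The measure `e^{-W} d^N x`. -/
def Wmeas (μ : Measure Λ) (N : ℕ) (W : (Fin N → Λ) → ℝ) : Measure (Fin N → Λ) :=
  (pm μ N).withDensity fun x => ENNReal.ofReal (Real.exp (-(W x)))

/-- The partition function `Z(V) = ∫ e^{-V-W} d^N x`, as an extended nonnegative real. -/
def ZE (μ : Measure Λ) (N : ℕ) (W V : (Fin N → Λ) → ℝ) : ℝ≥0∞ :=
  ∫⁻ x, ENNReal.ofReal (Real.exp (-(V x) - W x)) ∂(pm μ N)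

/-- The partition function `Z(V)` as a real number. -/
def Zfun (μ : Measure Λ) (N : ℕ) (W V : (Fin N → Λ) → ℝ) : ℝ :=
  (ZE μ N W V).toReal

/-- The functional `F_P(V) = exp(-∫ V P d^N x) / Z(V)`. -/
def FP (μ : Measure Λ) (N : ℕ) (P W V : (Fin N → Λ) → ℝ) : ℝ :=
  Real.exp (-∫ x, V x ∂(Pmeas μ N P)) / Zfun μ N W V

/-- Membership in the set `V_P`. -/
def memVP (μ : Measure Λ) (N m : ℕ) (P W V : (Fin N → Λ) → ℝ) : Prop :=
  Integrable V (Pmeas μ N P) ∧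
  Integrable (fun x => Real.exp (-(V x))) (Wmeas μ N W) ∧
  ∃ v, HasSumStruct μ N m V v

/-- Gluing `(y, z) ∈ Λ^m × Λ^{N-m}` into a point of `Λ^N`. -/
def glue {Λ : Type*} {N m : ℕ} (h : m ≤ N) (y : Fin m → Λ) (z : Fin (N - m) → Λ) :
    Fin N → Λ :=
  fun i => Fin.append y z (Fin.cast (by omega) i)

/-- The `m`-particle reduction `ρ^{(m)}` of `P`. -/
def rho (μ : Measure Λ) (N m : ℕ) (h : m ≤ N) (P : (Fin N → Λ) → ℝ)
    (y : Fin m → Λ) : ℝ :=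
  ∫ z, P (glue h y z) ∂(pm μ (N - m))

/-- The measure `ρ^{(m)} d^m x`. -/
def rhomeas (μ : Measure Λ) (N m : ℕ) (h : m ≤ N) (P : (Fin N → Λ) → ℝ) :
    Measure (Fin m → Λ) :=
  (pm μ m).withDensity fun y => ENNReal.ofReal (rho μ N m h P y)

/-- Membership in the set `V_{ρ^{(m)}}`. -/
def memVrho (μ : Measure Λ) (N m : ℕ) (h : m ≤ N) (P W V : (Fin N → Λ) → ℝ) : Prop :=
  Integrable (fun x => Real.exp (-(V x))) (Wmeas μ N W) ∧
  ∃ v, HasSumStruct μ N m V v ∧ Integrable v (rhomeas μ N m h P)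

/-- The `m`-particle density `ρ_U^{(m)}` associated with the potential `U`. -/
def rhoU (μ : Measure Λ) (N m : ℕ) (h : m ≤ N) (W U : (Fin N → Λ) → ℝ)
    (y : Fin m → Λ) : ℝ :=
  (∫ z, Real.exp (-(W (glue h y z)) - U (glue h y z)) ∂(pm μ (N - m))) / Zfun μ N W U


/-! ### Auxiliary lemmas -/

section Aux

variable (μ : Measure Λ) [SigmaFinite μ]

lemma pm_sigmaFinite (k : ℕ) : SigmaFinite (pm μ k) := by
  unfold pm; infer_instance

lemma pm_ne_zero (hμ : μ ≠ 0) (k : ℕ) : pm μ k ≠ 0 := by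
  intro h
  have h1 : (pm μ k) Set.univ = 0 := by rw [h]; rfl
  rw [show (Set.univ : Set (Fin k → Λ)) = Set.pi Set.univ (fun _ => Set.univ) by
      simp, pm, Measure.pi_pi] at h1
  rcases Finset.prod_eq_zero_iff.mp h1 with ⟨i, -, h2⟩
  exact hμ (Measure.measure_univ_eq_zero.mp h2)

lemma amgm_exp (p q : ℝ) :
    Real.exp (-((p + q) / 2)) ≤ (Real.exp (-p) + Real.exp (-q)) / 2 := by
  have h : Real.exp (-((p + q) / 2)) = Real.exp (-p / 2) * Real.exp (-q / 2) := by
    rw [← Real.exp_add]; congr 1; ring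
  have hp : Real.exp (-p) = Real.exp (-p / 2) * Real.exp (-p / 2) := by
    rw [← Real.exp_add]; congr 1; ring
  have hq : Real.exp (-q) = Real.exp (-q / 2) * Real.exp (-q / 2) := by
    rw [← Real.exp_add]; congr 1; ring
  rw [h, hp, hq]
  nlinarith [sq_nonneg (Real.exp (-p / 2) - Real.exp (-q / 2))]

lemma key_real (p q w : ℝ) :
    Real.exp (-p - w) + Real.exp (-q - w) =
      Real.exp (-((p + q) / 2) - w) + Real.exp (-((p + q) / 2) - w) +
        (Real.exp (-(p + w) / 2) - Real.exp (-(q + w) / 2)) *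
          (Real.exp (-(p + w) / 2) - Real.exp (-(q + w) / 2)) := by
  have h1 : Real.exp (-p - w) = Real.exp (-(p + w) / 2) * Real.exp (-(p + w) / 2) := by
    rw [← Real.exp_add]; congr 1; ring
  have h2 : Real.exp (-q - w) = Real.exp (-(q + w) / 2) * Real.exp (-(q + w) / 2) := by
    rw [← Real.exp_add]; congr 1; ring
  have h3 : Real.exp (-((p + q) / 2) - w) =
      Real.exp (-(p + w) / 2) * Real.exp (-(q + w) / 2) := by
    rw [← Real.exp_add]; congr 1; ring
  rw [h1, h2, h3]; ring

/-! #### `mSum` lemmas -/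

lemma mSum_measurable {N m : ℕ} {v : (Fin m → Λ) → ℝ} (hv : Measurable v) :
    Measurable (mSum N m v) := by
  unfold mSum
  apply Finset.measurable_sum
  intro s hs
  have h : s.card = m := (Finset.mem_powersetCard.mp hs).2
  simp only [dif_pos h]
  exact hv.comp (measurable_pi_lambda _ fun i => measurable_pi_apply _)

lemma mSum_add {Λ : Type*} {N m : ℕ} (v w : (Fin m → Λ) → ℝ) (x : Fin N → Λ) :
    mSum N m (fun y => v y + w y) x = mSum N m v x + mSum N m w x := by
  unfold mSum
  rw [← Finset.sum_add_distrib]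
  refine Finset.sum_congr rfl fun s hs => ?_
  have h : s.card = m := (Finset.mem_powersetCard.mp hs).2
  simp only [dif_pos h]

lemma mSum_div {Λ : Type*} {N m : ℕ} (v : (Fin m → Λ) → ℝ) (c : ℝ) (x : Fin N → Λ) :
    mSum N m (fun y => v y / c) x = mSum N m v x / c := by
  unfold mSum
  have key : ∀ s ∈ Finset.powersetCard m (Finset.univ : Finset (Fin N)),
      (if h : s.card = m then (fun y => v y / c) (fun i => x (s.orderEmbOfFin h i)) else 0)
        = (if h : s.card = m then v (fun i => x (s.orderEmbOfFin h i)) else 0) / c := by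
    intro s hs
    have h : s.card = m := (Finset.mem_powersetCard.mp hs).2
    simp only [dif_pos h]
  rw [Finset.sum_congr rfl key, ← Finset.sum_div]

lemma mSum_const {Λ : Type*} {N m : ℕ} (k : ℝ) (x : Fin N → Λ) :
    mSum N m (fun _ => k) x = (N.choose m : ℝ) * k := by
  unfold mSum
  have : ∀ s ∈ Finset.powersetCard m (Finset.univ : Finset (Fin N)),
      (if h : s.card = m then k else 0) = k := by
    intro s hs
    have h : s.card = m := (Finset.mem_powersetCard.mp hs).2
    simp only [dif_pos h]
  rw [Finset.sum_congr rfl this, Finset.sum_const, Finset.card_powersetCard,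
    Finset.card_univ, Fintype.card_fin, nsmul_eq_mul]

lemma mSum_add_const {Λ : Type*} {N m : ℕ} (v : (Fin m → Λ) → ℝ) (k : ℝ) (x : Fin N → Λ) :
    mSum N m (fun y => v y + k) x = mSum N m v x + (N.choose m : ℝ) * k := by
  rw [mSum_add v (fun _ => k) x, mSum_const]

/-! #### Basic facts about `ZE`, `Zfun`, `FP` -/

variable {N : ℕ} {P W : (Fin N → Λ) → ℝ}

lemma pmeas_prob (hPprob : ∫⁻ x, ENNReal.ofReal (P x) ∂(pm μ N) = 1) :
    IsProbabilityMeasure (Pmeas μ N P) := by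
  constructor
  rw [Pmeas, withDensity_apply _ MeasurableSet.univ, setLIntegral_univ]
  exact hPprob

lemma aemeasurable_expneg {V : (Fin N → Λ) → ℝ} (hV : AEMeasurable V (pm μ N)) :
    AEMeasurable (fun x => ENNReal.ofReal (Real.exp (-(V x)))) (pm μ N) :=
  ENNReal.measurable_ofReal.comp_aemeasurable
    (Real.measurable_exp.comp_aemeasurable hV.neg)

lemma aemeasurable_expVW {V : (Fin N → Λ) → ℝ} (hW : Measurable W)
    (hV : AEMeasurable V (pm μ N)) :
    AEMeasurable (fun x => ENNReal.ofReal (Real.exp (-(V x) - W x))) (pm μ N) :=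
  ENNReal.measurable_ofReal.comp_aemeasurable
    (Real.measurable_exp.comp_aemeasurable (hV.neg.sub hW.aemeasurable))

lemma ZE_eq_wmeas (hW : Measurable W) {V : (Fin N → Λ) → ℝ}
    (hV : AEMeasurable V (pm μ N)) :
    ZE μ N W V = ∫⁻ x, ENNReal.ofReal (Real.exp (-(V x))) ∂(Wmeas μ N W) := by
  rw [Wmeas, lintegral_withDensity_eq_lintegral_mul₀
      (by fun_prop : Measurable fun x => ENNReal.ofReal (Real.exp (-(W x)))).aemeasurable
      (aemeasurable_expneg μ hV)]
  refine lintegral_congr fun x => ?_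
  simp only [Pi.mul_apply]
  rw [← ENNReal.ofReal_mul (Real.exp_nonneg _), ← Real.exp_add]
  congr 2
  ring

lemma ZE_lt_top (hW : Measurable W) {V : (Fin N → Λ) → ℝ}
    (hV : AEMeasurable V (pm μ N))
    (hVint : Integrable (fun x => Real.exp (-(V x))) (Wmeas μ N W)) :
    ZE μ N W V < ∞ := by
  rw [ZE_eq_wmeas μ hW hV]
  exact hVint.lintegral_lt_top

lemma ZE_pos (hμ : μ ≠ 0) (hW : Measurable W) {V : (Fin N → Λ) → ℝ}
    (hV : AEMeasurable V (pm μ N)) : 0 < ZE μ N W V := by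
  rcases eq_or_lt_of_le (zero_le : 0 ≤ ZE μ N W V) with h | h
  · exfalso
    have h0 := (lintegral_eq_zero_iff' (aemeasurable_expVW μ hW hV)).mp h.symm
    have h1 : ∀ᵐ x ∂(pm μ N), False := by
      refine h0.mono fun x hx => ?_
      simp only [Pi.zero_apply, ENNReal.ofReal_eq_zero] at hx
      exact absurd hx (not_le.mpr (Real.exp_pos _))
    rw [ae_iff] at h1
    simp only [not_false_eq_true, Set.setOf_true] at h1
    exact pm_ne_zero μ hμ N (Measure.measure_univ_eq_zero.mp h1)
  · exact h

lemma Zfun_pos (hμ : μ ≠ 0) (hW : Measurable W) {V : (Fin N → Λ) → ℝ}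
    (hV : AEMeasurable V (pm μ N))
    (hVint : Integrable (fun x => Real.exp (-(V x))) (Wmeas μ N W)) :
    0 < Zfun μ N W V :=
  ENNReal.toReal_pos (ZE_pos μ hμ hW hV).ne' (ZE_lt_top μ hW hV hVint).ne

lemma ZE_shift (V : (Fin N → Λ) → ℝ) (c : ℝ) :
    ZE μ N W (fun x => V x + c) = ENNReal.ofReal (Real.exp (-c)) * ZE μ N W V := by
  rw [ZE, ZE, ← lintegral_const_mul' _ _ ENNReal.ofReal_ne_top]
  refine lintegral_congr fun x => ?_
  rw [← ENNReal.ofReal_mul (Real.exp_nonneg _), ← Real.exp_add]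
  congr 2
  ring

lemma Zfun_shift (V : (Fin N → Λ) → ℝ) (c : ℝ) :
    Zfun μ N W (fun x => V x + c) = Real.exp (-c) * Zfun μ N W V := by
  rw [Zfun, ZE_shift, ENNReal.toReal_mul, ENNReal.toReal_ofReal (Real.exp_nonneg _)]
  rfl

lemma FP_shift (hμ : μ ≠ 0) (hW : Measurable W)
    (hPprob : ∫⁻ x, ENNReal.ofReal (P x) ∂(pm μ N) = 1)
    {V : (Fin N → Λ) → ℝ} (hV : AEMeasurable V (pm μ N))
    (hVint : Integrable (fun x => Real.exp (-(V x))) (Wmeas μ N W))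
    (hVP : Integrable V (Pmeas μ N P)) (c : ℝ) :
    FP μ N P W (fun x => V x + c) = FP μ N P W V := by
  haveI := pmeas_prob μ hPprob
  have hZ : 0 < Zfun μ N W V := Zfun_pos μ hμ hW hV hVint
  rw [FP, FP, Zfun_shift, integral_add hVP (integrable_const c), integral_const]
  simp only [measure_univ, probReal_univ, ENNReal.toReal_one, smul_eq_mul, one_mul]
  have : Real.exp (-(∫ x, V x ∂Pmeas μ N P + c)) =
      Real.exp (-c) * Real.exp (-∫ x, V x ∂Pmeas μ N P) := by
    rw [← Real.exp_add]; congr 1; ring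
  rw [this, mul_div_mul_left _ _ (Real.exp_ne_zero _)]

lemma maximizer_integrable (hμ : μ ≠ 0) (hW : Measurable W)
    (hPprob : ∫⁻ x, ENNReal.ofReal (P x) ∂(pm μ N) = 1)
    (𝒞 : ((Fin N → Λ) → ℝ) → Prop)
    (hmeas : ∀ V, 𝒞 V → AEMeasurable V (pm μ N))
    (hWint : ∀ V, 𝒞 V → Integrable (fun x => Real.exp (-(V x))) (Wmeas μ N W))
    (hshift : ∀ V (c : ℝ), 𝒞 V → 𝒞 (fun x => V x + c))
    {U : (Fin N → Λ) → ℝ} (hU : 𝒞 U)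
    (hmax : ∀ V, 𝒞 V → FP μ N P W V ≤ FP μ N P W U) :
    Integrable U (Pmeas μ N P) := by
  haveI := pmeas_prob μ hPprob
  by_contra hnint
  have hZ : 0 < Zfun μ N W U := Zfun_pos μ hμ hW (hmeas U hU) (hWint U hU)
  have hU1 : 𝒞 (fun x => U x + 1) := hshift U 1 hU
  have hle := hmax _ hU1
  have hnint1 : ¬ Integrable (fun x => U x + 1) (Pmeas μ N P) := by
    intro h
    exact hnint (((h.sub (integrable_const (1 : ℝ))).congr
      (Filter.Eventually.of_forall fun x => by simp)))
  rw [FP, FP, integral_undef hnint, integral_undef hnint1, Zfun_shift] at hle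
  simp only [neg_zero, Real.exp_zero] at hle
  have hlt : (1 : ℝ) / Zfun μ N W U < 1 / (Real.exp (-(1:ℝ)) * Zfun μ N W U) := by
    apply one_div_lt_one_div_of_lt
    · positivity
    · nth_rewrite 2 [show Zfun μ N W U = 1 * Zfun μ N W U by ring]
      exact mul_lt_mul_of_pos_right (Real.exp_lt_one_iff.mpr (by norm_num)) hZ
  exact absurd (lt_of_lt_of_le hlt hle) (lt_irrefl _)

/-- The core uniqueness argument, for an abstract class `𝒞` of potentials. -/
lemma core_unique (hμ : μ ≠ 0) (hW : Measurable W)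
    (hPprob : ∫⁻ x, ENNReal.ofReal (P x) ∂(pm μ N) = 1)
    (𝒞 : ((Fin N → Λ) → ℝ) → Prop)
    (hmeas : ∀ V, 𝒞 V → AEMeasurable V (pm μ N))
    (hWint : ∀ V, 𝒞 V → Integrable (fun x => Real.exp (-(V x))) (Wmeas μ N W))
    (hshift : ∀ V (c : ℝ), 𝒞 V → 𝒞 (fun x => V x + c))
    (hmid : ∀ V₀ V₁, 𝒞 V₀ → 𝒞 V₁ → 𝒞 (fun x => (V₀ x + V₁ x) / 2))
    (U₀ U₁ : (Fin N → Λ) → ℝ) (h₀ : 𝒞 U₀) (h₁ : 𝒞 U₁)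
    (hint₀ : Integrable U₀ (Pmeas μ N P)) (hint₁ : Integrable U₁ (Pmeas μ N P))
    (hmax₀ : ∀ V, 𝒞 V → FP μ N P W V ≤ FP μ N P W U₀)
    (hmax₁ : ∀ V, 𝒞 V → FP μ N P W V ≤ FP μ N P W U₁) :
    ∃ C : ℝ, (fun x => U₁ x - U₀ x) =ᵐ[pm μ N] fun _ => C := by
  haveI := pmeas_prob μ hPprob
  set a₀ : ℝ := ∫ x, U₀ x ∂(Pmeas μ N P) with ha₀
  set a₁ : ℝ := ∫ x, U₁ x ∂(Pmeas μ N P) with ha₁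
  set c : ℝ := a₀ - a₁ with hc
  set U₂ : (Fin N → Λ) → ℝ := fun x => U₁ x + c with hU₂
  refine ⟨-c, ?_⟩
  have h₂ : 𝒞 U₂ := hshift U₁ c h₁
  have hint₂ : Integrable U₂ (Pmeas μ N P) := hint₁.add (integrable_const c)
  have ha₂ : ∫ x, U₂ x ∂(Pmeas μ N P) = a₀ := by
    rw [hU₂]
    rw [integral_add hint₁ (integrable_const c), integral_const]
    simp only [measure_univ, probReal_univ, ENNReal.toReal_one, smul_eq_mul, one_mul]
    rw [hc]; ring
  -- measurability
  have hm₀ : AEMeasurable U₀ (pm μ N) := hmeas U₀ h₀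
  have hm₂ : AEMeasurable U₂ (pm μ N) := hmeas U₂ h₂
  -- F_P values agree
  have hFP01 : FP μ N P W U₀ = FP μ N P W U₁ :=
    le_antisymm (hmax₁ U₀ h₀) (hmax₀ U₁ h₁)
  have hFP2 : FP μ N P W U₂ = FP μ N P W U₀ := by
    rw [hU₂, FP_shift μ hμ hW hPprob (hmeas U₁ h₁) (hWint U₁ h₁) hint₁, hFP01]
  -- positivity and finiteness of partition functions
  have hZ₀ : 0 < Zfun μ N W U₀ := Zfun_pos μ hμ hW hm₀ (hWint U₀ h₀)
  have hZ₂ : 0 < Zfun μ N W U₂ := Zfun_pos μ hμ hW hm₂ (hWint U₂ h₂)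
  have hZE₀top : ZE μ N W U₀ ≠ ∞ := (ZE_lt_top μ hW hm₀ (hWint U₀ h₀)).ne
  have hZE₂top : ZE μ N W U₂ ≠ ∞ := (ZE_lt_top μ hW hm₂ (hWint U₂ h₂)).ne
  -- Z₀ = Z₂
  have hZeq : Zfun μ N W U₀ = Zfun μ N W U₂ := by
    have := hFP2
    rw [FP, FP, ha₂, ← ha₀] at this
    field_simp at this
    linarith
  have hZEeq : ZE μ N W U₀ = ZE μ N W U₂ :=
    (ENNReal.toReal_eq_toReal_iff' hZE₀top hZE₂top).mp hZeq
  -- midpoint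
  set M : (Fin N → Λ) → ℝ := fun x => (U₀ x + U₂ x) / 2 with hM
  have hMc : 𝒞 M := hmid U₀ U₂ h₀ h₂
  have hmM : AEMeasurable M (pm μ N) := hmeas M hMc
  have hintM : Integrable M (Pmeas μ N P) := (hint₀.add hint₂).div_const 2
  have haM : ∫ x, M x ∂(Pmeas μ N P) = a₀ := by
    rw [hM]
    rw [integral_div, integral_add hint₀ hint₂, ha₂, ← ha₀]
    ring
  have hZM : 0 < Zfun μ N W M := Zfun_pos μ hμ hW hmM (hWint M hMc)
  have hZEMtop : ZE μ N W M ≠ ∞ := (ZE_lt_top μ hW hmM (hWint M hMc)).ne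
  -- from maximality: Z₀ ≤ Z_M
  have hZle : Zfun μ N W U₀ ≤ Zfun μ N W M := by
    have hle := hmax₀ M hMc
    rw [FP, FP, haM, ← ha₀] at hle
    rw [div_le_div_iff₀ hZM hZ₀] at hle
    exact le_of_mul_le_mul_left (by linarith) (Real.exp_pos (-a₀))
  have hZEle : ZE μ N W U₀ ≤ ZE μ N W M :=
    (ENNReal.toReal_le_toReal hZE₀top hZEMtop).mp hZle
  -- pointwise AM–GM identity
  set s : (Fin N → Λ) → ℝ := fun x => Real.exp (-(U₀ x + W x) / 2) with hs
  set t : (Fin N → Λ) → ℝ := fun x => Real.exp (-(U₂ x + W x) / 2) with ht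
  set D : (Fin N → Λ) → ℝ := fun x => (s x - t x) * (s x - t x) with hD
  have hptwise : ∀ x,
      ENNReal.ofReal (Real.exp (-(U₀ x) - W x)) + ENNReal.ofReal (Real.exp (-(U₂ x) - W x)) =
        ENNReal.ofReal (Real.exp (-(M x) - W x)) + ENNReal.ofReal (Real.exp (-(M x) - W x)) +
          ENNReal.ofReal (D x) := by
    intro x
    rw [← ENNReal.ofReal_add (Real.exp_nonneg _) (Real.exp_nonneg _),
      ← ENNReal.ofReal_add (Real.exp_nonneg _) (Real.exp_nonneg _),
      ← ENNReal.ofReal_add (add_nonneg (Real.exp_nonneg _) (Real.exp_nonneg _))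
        (mul_self_nonneg _)]
    congr 1
    exact key_real (U₀ x) (U₂ x) (W x)
  -- measurability of the pieces
  have hmD : AEMeasurable (fun x => ENNReal.ofReal (D x)) (pm μ N) := by
    have hms : AEMeasurable s (pm μ N) :=
      Real.measurable_exp.comp_aemeasurable ((hm₀.add hW.aemeasurable).neg.div_const 2)
    have hmt : AEMeasurable t (pm μ N) :=
      Real.measurable_exp.comp_aemeasurable ((hm₂.add hW.aemeasurable).neg.div_const 2)
    exact ENNReal.measurable_ofReal.comp_aemeasurable ((hms.sub hmt).mul (hms.sub hmt))
  have hmEM : AEMeasurable (fun x => ENNReal.ofReal (Real.exp (-(M x) - W x))) (pm μ N) :=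
    aemeasurable_expVW μ hW hmM
  -- integrate the pointwise identity
  have hint_eq : ZE μ N W U₀ + ZE μ N W U₂ =
      ZE μ N W M + ZE μ N W M + ∫⁻ x, ENNReal.ofReal (D x) ∂(pm μ N) := by
    have hL : ZE μ N W U₀ + ZE μ N W U₂ =
        ∫⁻ x, (ENNReal.ofReal (Real.exp (-(U₀ x) - W x)) +
          ENNReal.ofReal (Real.exp (-(U₂ x) - W x))) ∂(pm μ N) := by
      rw [lintegral_add_left' (aemeasurable_expVW μ hW hm₀)]
      rfl
    have hR : ZE μ N W M + ZE μ N W M + (∫⁻ x, ENNReal.ofReal (D x) ∂(pm μ N)) =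
        ∫⁻ x, (ENNReal.ofReal (Real.exp (-(M x) - W x)) +
          ENNReal.ofReal (Real.exp (-(M x) - W x)) + ENNReal.ofReal (D x)) ∂(pm μ N) := by
      rw [lintegral_add_left' (by exact hmEM.add hmEM : AEMeasurable (fun x =>
        ENNReal.ofReal (Real.exp (-(M x) - W x)) + ENNReal.ofReal (Real.exp (-(M x) - W x)))
        (pm μ N)), lintegral_add_left' hmEM]
      rfl
    rw [hL, hR]
    exact lintegral_congr hptwise
  -- conclude that the defect integral vanishes
  have hDzero : ∫⁻ x, ENNReal.ofReal (D x) ∂(pm μ N) = 0 := by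
    by_contra hne
    have h1 : ZE μ N W M + ZE μ N W M <
        ZE μ N W M + ZE μ N W M + ∫⁻ x, ENNReal.ofReal (D x) ∂(pm μ N) :=
      ENNReal.lt_add_right (ENNReal.add_ne_top.mpr ⟨hZEMtop, hZEMtop⟩) hne
    rw [← hint_eq, ← hZEeq] at h1
    exact absurd (lt_of_lt_of_le h1 (add_le_add hZEle hZEle)) (lt_irrefl _)
  have hDae : ∀ᵐ x ∂(pm μ N), ENNReal.ofReal (D x) = 0 := by
    have := (lintegral_eq_zero_iff' hmD).mp hDzero
    exact this
  refine hDae.mono fun x hx => ?_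
  have hDle : D x ≤ 0 := ENNReal.ofReal_eq_zero.mp hx
  have hD0 : D x = 0 := le_antisymm hDle (mul_self_nonneg _)
  have hst : s x = t x := sub_eq_zero.mp (mul_self_eq_zero.mp hD0)
  have : -(U₀ x + W x) / 2 = -(U₂ x + W x) / 2 := Real.exp_injective hst
  have hU02 : U₀ x = U₂ x := by field_simp at this; linarith
  show U₁ x - U₀ x = -c
  rw [hU02]
  simp only [hU₂]
  ring

/-! #### The gluing map and finiteness of `ρ^{(m)} d^m x` -/

lemma glue_measurePreserving (N m : ℕ) (hmN : m ≤ N) :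
    MeasurePreserving (fun p : (Fin m → Λ) × (Fin (N - m) → Λ) => glue hmN p.1 p.2)
      ((pm μ m).prod (pm μ (N - m))) (pm μ N) := by
  set e : Fin m ⊕ Fin (N - m) ≃ Fin N :=
    finSumFinEquiv.trans (finCongr (Nat.add_sub_cancel' hmN)) with he
  have h1 : MeasurePreserving
      (MeasurableEquiv.sumPiEquivProdPi (fun _ : Fin m ⊕ Fin (N - m) => Λ)).symm
      ((pm μ m).prod (pm μ (N - m))) (Measure.pi (fun _ : Fin m ⊕ Fin (N - m) => μ)) :=
    measurePreserving_sumPiEquivProdPi_symm (fun _ => μ)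
  have h2 : MeasurePreserving (MeasurableEquiv.piCongrLeft (fun _ : Fin N => Λ) e)
      (Measure.pi (fun _ : Fin m ⊕ Fin (N - m) => μ)) (pm μ N) :=
    measurePreserving_piCongrLeft (fun _ => μ) e
  have h3 := h2.comp h1
  have hfun : (fun p : (Fin m → Λ) × (Fin (N - m) → Λ) => glue hmN p.1 p.2) =
      (MeasurableEquiv.piCongrLeft (fun _ : Fin N => Λ) e) ∘
        (MeasurableEquiv.sumPiEquivProdPi (fun _ : Fin m ⊕ Fin (N - m) => Λ)).symm := by
    funext p
    funext i
    have hrhs : ((MeasurableEquiv.piCongrLeft (fun _ : Fin N => Λ) e) ∘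
        (MeasurableEquiv.sumPiEquivProdPi (fun _ : Fin m ⊕ Fin (N - m) => Λ)).symm) p i =
        cast (congrArg (fun _ => Λ) (e.apply_symm_apply i))
          (((Equiv.sumPiEquivProdPi (fun _ : Fin m ⊕ Fin (N - m) => Λ)).symm p) (e.symm i)) :=
      Equiv.piCongrLeft_apply_eq_cast _ _
    rw [hrhs, eq_of_heq (cast_heq _ _)]
    obtain ⟨u, rfl⟩ := e.surjective i
    rw [e.symm_apply_apply]
    cases u with
    | inl a =>
      have hcast : Fin.cast (show N = m + (N - m) by omega) (e (Sum.inl a)) =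
          Fin.castAdd (N - m) a := by
        ext
        simp [he]
      show Fin.append p.1 p.2 (Fin.cast _ (e (Sum.inl a))) = _
      rw [hcast, Fin.append_left]
      rfl
    | inr b =>
      have hcast : Fin.cast (show N = m + (N - m) by omega) (e (Sum.inr b)) =
          Fin.natAdd m b := by
        ext
        simp [he]
      show Fin.append p.1 p.2 (Fin.cast _ (e (Sum.inr b))) = _
      rw [hcast, Fin.append_right]
      rfl
  rw [hfun]
  exact h3

lemma rhomeas_univ_lt_top {m : ℕ} (hmN : m ≤ N) (hPmeas : Measurable P)
    (hPpos : ∀ᵐ x ∂(pm μ N), 0 < P x)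
    (hPprob : ∫⁻ x, ENNReal.ofReal (P x) ∂(pm μ N) = 1) :
    rhomeas μ N m hmN P Set.univ < ∞ := by
  haveI : SigmaFinite (pm μ (N - m)) := pm_sigmaFinite μ _
  have hmp := glue_measurePreserving μ N m hmN
  have hTmeas : Measurable (fun p : (Fin m → Λ) × (Fin (N - m) → Λ) => glue hmN p.1 p.2) :=
    hmp.measurable
  rw [rhomeas, withDensity_apply _ MeasurableSet.univ, setLIntegral_univ]
  have step1 : ∫⁻ y, ENNReal.ofReal (rho μ N m hmN P y) ∂(pm μ m) ≤
      ∫⁻ y, ∫⁻ z, (‖P (glue hmN y z)‖₊ : ℝ≥0∞) ∂(pm μ (N - m)) ∂(pm μ m) := by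
    refine lintegral_mono fun y => ?_
    calc ENNReal.ofReal (rho μ N m hmN P y)
        ≤ (‖rho μ N m hmN P y‖₊ : ℝ≥0∞) := Real.ofReal_le_enorm _
      _ ≤ _ := by rw [rho]; exact enorm_integral_le_lintegral_enorm _
  have step2 : ∫⁻ y, ∫⁻ z, (‖P (glue hmN y z)‖₊ : ℝ≥0∞) ∂(pm μ (N - m)) ∂(pm μ m) =
      ∫⁻ p, (‖P (glue hmN p.1 p.2)‖₊ : ℝ≥0∞) ∂((pm μ m).prod (pm μ (N - m))) :=
    (lintegral_prod _ ((hPmeas.comp hTmeas).enorm.aemeasurable)).symm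
  have step3 : ∫⁻ p, (‖P (glue hmN p.1 p.2)‖₊ : ℝ≥0∞) ∂((pm μ m).prod (pm μ (N - m))) =
      ∫⁻ x, (‖P x‖₊ : ℝ≥0∞) ∂(pm μ N) :=
    hmp.lintegral_comp hPmeas.enorm
  have step4 : ∫⁻ x, (‖P x‖₊ : ℝ≥0∞) ∂(pm μ N) = 1 := by
    rw [← hPprob]
    exact lintegral_congr_ae (hPpos.mono fun x hx => Real.enorm_eq_ofReal hx.le)
  calc ∫⁻ y, ENNReal.ofReal (rho μ N m hmN P y) ∂(pm μ m)
      ≤ ∫⁻ y, ∫⁻ z, (‖P (glue hmN y z)‖₊ : ℝ≥0∞) ∂(pm μ (N - m)) ∂(pm μ m) := step1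
    _ = 1 := by rw [step2, step3, step4]
    _ < ∞ := ENNReal.one_lt_top

/-! #### Closure properties of the classes -/

variable {m : ℕ}

lemma HasSumStruct.shift (hmN : m ≤ N) {V : (Fin N → Λ) → ℝ} {v : (Fin m → Λ) → ℝ}
    (h : HasSumStruct μ N m V v) (c : ℝ) :
    HasSumStruct μ N m (fun x => V x + c) (fun y => v y + c / (N.choose m : ℝ)) := by
  obtain ⟨hsym, hvm, hae⟩ := h
  have hch : (N.choose m : ℝ) ≠ 0 := Nat.cast_ne_zero.mpr (Nat.choose_pos hmN).ne'
  have hcc : (N.choose m : ℝ) * (c / (N.choose m : ℝ)) = c := by field_simp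
  refine ⟨fun σ x => by simp only; rw [hsym σ x], hvm.add_const _, ?_⟩
  filter_upwards [hae] with x hx
  show V x + c = mSum N m (fun y => v y + c / (N.choose m : ℝ)) x
  rw [mSum_add_const, hcc, ← hx]

lemma HasSumStruct.mid {V₀ V₁ : (Fin N → Λ) → ℝ} {v₀ v₁ : (Fin m → Λ) → ℝ}
    (h₀ : HasSumStruct μ N m V₀ v₀) (h₁ : HasSumStruct μ N m V₁ v₁) :
    HasSumStruct μ N m (fun x => (V₀ x + V₁ x) / 2) (fun y => (v₀ y + v₁ y) / 2) := by
  obtain ⟨hsym₀, hvm₀, hae₀⟩ := h₀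
  obtain ⟨hsym₁, hvm₁, hae₁⟩ := h₁
  refine ⟨fun σ x => by simp only; rw [hsym₀ σ x, hsym₁ σ x],
    (hvm₀.add hvm₁).div_const 2, ?_⟩
  filter_upwards [hae₀, hae₁] with x hx₀ hx₁
  show (V₀ x + V₁ x) / 2 = mSum N m (fun y => (v₀ y + v₁ y) / 2) x
  rw [mSum_div, mSum_add, ← hx₀, ← hx₁]

lemma sumStruct_aemeasurable {V : (Fin N → Λ) → ℝ} {v : (Fin m → Λ) → ℝ}
    (h : HasSumStruct μ N m V v) : AEMeasurable V (pm μ N) :=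
  ((mSum_measurable h.2.1).aemeasurable).congr h.2.2.symm

lemma wint_shift {V : (Fin N → Λ) → ℝ}
    (h : Integrable (fun x => Real.exp (-(V x))) (Wmeas μ N W)) (c : ℝ) :
    Integrable (fun x => Real.exp (-(V x + c))) (Wmeas μ N W) := by
  have heq : (fun x => Real.exp (-(V x + c))) =
      fun x => Real.exp (-c) * Real.exp (-(V x)) := by
    funext x; rw [← Real.exp_add]; congr 1; ring
  rw [heq]
  exact h.const_mul _

lemma wint_mid {V₀ V₁ : (Fin N → Λ) → ℝ}
    (hW : Measurable W)
    (hm₀ : AEMeasurable V₀ (pm μ N)) (hm₁ : AEMeasurable V₁ (pm μ N))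
    (h₀ : Integrable (fun x => Real.exp (-(V₀ x))) (Wmeas μ N W))
    (h₁ : Integrable (fun x => Real.exp (-(V₁ x))) (Wmeas μ N W)) :
    Integrable (fun x => Real.exp (-((V₀ x + V₁ x) / 2))) (Wmeas μ N W) := by
  have hac : Wmeas μ N W ≪ pm μ N := withDensity_absolutelyContinuous _ _
  have hmw : AEMeasurable (fun x => (V₀ x + V₁ x) / 2) (Wmeas μ N W) :=
    ((hm₀.add hm₁).div_const 2).mono_ac hac
  refine Integrable.mono' ((h₀.add h₁).div_const 2)
    (Real.measurable_exp.comp_aemeasurable hmw.neg).aestronglyMeasurable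
    (Filter.Eventually.of_forall fun x => ?_)
  rw [Real.norm_eq_abs, abs_of_nonneg (Real.exp_nonneg _)]
  exact amgm_exp (V₀ x) (V₁ x)

end Aux

/-- Any two maximizers of `F_P` on `V_P` differ a.e. by a real
constant; the same holds on `V_{ρ^{(m)}}`. -/
theorem statement6 (μ : Measure Λ) [SigmaFinite μ] (hμ : μ ≠ 0)
    (N m : ℕ) (hN : 2 ≤ N) (hm : 1 ≤ m) (hmN : m ≤ N)
    (P W : (Fin N → Λ) → ℝ) (hPmeas : Measurable P)
    (hPprob : ∫⁻ x, ENNReal.ofReal (P x) ∂(pm μ N) = 1)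
    (hPpos : ∀ᵐ x ∂(pm μ N), 0 < P x)
    (hWmeas : Measurable W) :
    (∀ U₀ U₁ : (Fin N → Λ) → ℝ,
        memVP μ N m P W U₀ → memVP μ N m P W U₁ →
        (∀ V, memVP μ N m P W V → FP μ N P W V ≤ FP μ N P W U₀) →
        (∀ V, memVP μ N m P W V → FP μ N P W V ≤ FP μ N P W U₁) →
        ∃ C : ℝ, (fun x => U₁ x - U₀ x) =ᵐ[pm μ N] fun _ => C) ∧
    (∀ U₀ U₁ : (Fin N → Λ) → ℝ,
        memVrho μ N m hmN P W U₀ → memVrho μ N m hmN P W U₁ →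
        (∀ V, memVrho μ N m hmN P W V → FP μ N P W V ≤ FP μ N P W U₀) →
        (∀ V, memVrho μ N m hmN P W V → FP μ N P W V ≤ FP μ N P W U₁) →
        ∃ C : ℝ, (fun x => U₁ x - U₀ x) =ᵐ[pm μ N] fun _ => C) := by
  haveI := pmeas_prob μ hPprob
  constructor
  · -- the class `V_P`
    intro U₀ U₁ h₀ h₁ hmax₀ hmax₁
    have hmeas : ∀ V, memVP μ N m P W V → AEMeasurable V (pm μ N) := by
      intro V hV
      obtain ⟨-, -, v, hstr⟩ := hV
      exact sumStruct_aemeasurable μ hstr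
    have hWint : ∀ V, memVP μ N m P W V →
        Integrable (fun x => Real.exp (-(V x))) (Wmeas μ N W) := fun V hV => hV.2.1
    have hshift : ∀ V (c : ℝ), memVP μ N m P W V → memVP μ N m P W (fun x => V x + c) := by
      intro V c hV
      obtain ⟨hP, hWi, v, hstr⟩ := hV
      exact ⟨hP.add (integrable_const c), wint_shift μ hWi c, _, hstr.shift μ hmN c⟩
    have hmid : ∀ V₀ V₁, memVP μ N m P W V₀ → memVP μ N m P W V₁ →
        memVP μ N m P W (fun x => (V₀ x + V₁ x) / 2) := by
      intro V₀ V₁ hV₀ hV₁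
      obtain ⟨hP₀, hWi₀, v₀, hstr₀⟩ := hV₀
      obtain ⟨hP₁, hWi₁, v₁, hstr₁⟩ := hV₁
      exact ⟨(hP₀.add hP₁).div_const 2,
        wint_mid μ hWmeas (sumStruct_aemeasurable μ hstr₀) (sumStruct_aemeasurable μ hstr₁)
          hWi₀ hWi₁, _, hstr₀.mid μ hstr₁⟩
    exact core_unique μ hμ hWmeas hPprob (memVP μ N m P W) hmeas hWint hshift hmid
      U₀ U₁ h₀ h₁ h₀.1 h₁.1 hmax₀ hmax₁
  · -- the class `V_{ρ^{(m)}}`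
    intro U₀ U₁ h₀ h₁ hmax₀ hmax₁
    have hfin : rhomeas μ N m hmN P Set.univ < ∞ :=
      rhomeas_univ_lt_top μ hmN hPmeas hPpos hPprob
    have hmeas : ∀ V, memVrho μ N m hmN P W V → AEMeasurable V (pm μ N) := by
      intro V hV
      obtain ⟨-, v, hstr, -⟩ := hV
      exact sumStruct_aemeasurable μ hstr
    have hWint : ∀ V, memVrho μ N m hmN P W V →
        Integrable (fun x => Real.exp (-(V x))) (Wmeas μ N W) := fun V hV => hV.1
    have hshift : ∀ V (c : ℝ), memVrho μ N m hmN P W V →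
        memVrho μ N m hmN P W (fun x => V x + c) := by
      intro V c hV
      obtain ⟨hWi, v, hstr, hv⟩ := hV
      exact ⟨wint_shift μ hWi c, _, hstr.shift μ hmN c,
        hv.add (integrable_const_iff.mpr (Or.inr ⟨hfin⟩))⟩
    have hmid : ∀ V₀ V₁, memVrho μ N m hmN P W V₀ → memVrho μ N m hmN P W V₁ →
        memVrho μ N m hmN P W (fun x => (V₀ x + V₁ x) / 2) := by
      intro V₀ V₁ hV₀ hV₁
      obtain ⟨hWi₀, v₀, hstr₀, hv₀⟩ := hV₀
      obtain ⟨hWi₁, v₁, hstr₁, hv₁⟩ := hV₁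
      exact ⟨wint_mid μ hWmeas (sumStruct_aemeasurable μ hstr₀)
          (sumStruct_aemeasurable μ hstr₁) hWi₀ hWi₁, _, hstr₀.mid μ hstr₁,
        (hv₀.add hv₁).div_const 2⟩
    have hint₀ : Integrable U₀ (Pmeas μ N P) :=
      maximizer_integrable μ hμ hWmeas hPprob (memVrho μ N m hmN P W)
        hmeas hWint hshift h₀ hmax₀
    have hint₁ : Integrable U₁ (Pmeas μ N P) :=
      maximizer_integrable μ hμ hWmeas hPprob (memVrho μ N m hmN P W)
        hmeas hWint hshift h₁ hmax₁
    exact core_unique μ hμ hWmeas hPprob (memVrho μ N m hmN P W) hmeas hWint hshift hmid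
      U₀ U₁ h₀ h₁ hint₀ hint₁ hmax₀ hmax₁

end
end

section
/- Assume (W + log P)₊ ∈ L¹(Λ^N; P d^N x). Then F_P is bounded on V_P: for every V ∈ V_P, 0 < F_P(V) ≤ exp(∫_{Λ^N} (W + log P)₊ P d^N x). -/
open MeasureTheory Real Filter
open scoped ENNReal

noncomputable section

variable {Λ : Type*} [MeasurableSpace Λ]

/-- If `(W + log P)₊ ∈ L¹(Λ^N; P d^N x)` then `F_P` is bounded on
`V_P`: `0 < F_P(V) ≤ exp(∫ (W + log P)₊ P d^N x)` for every `V ∈ V_P`. -/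
theorem statement7 (μ : Measure Λ) [SigmaFinite μ] (hμ : μ ≠ 0)
    (N m : ℕ) (hN : 2 ≤ N) (hm : 1 ≤ m) (hmN : m ≤ N)
    (P W : (Fin N → Λ) → ℝ) (hPmeas : Measurable P)
    (hPprob : ∫⁻ x, ENNReal.ofReal (P x) ∂(pm μ N) = 1)
    (hPpos : ∀ᵐ x ∂(pm μ N), 0 < P x)
    (hWmeas : Measurable W)
    (hWlogP : Integrable (fun x => max (W x + Real.log (P x)) 0) (Pmeas μ N P))
    (V : (Fin N → Λ) → ℝ) (hV : memVP μ N m P W V) :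
    0 < FP μ N P W V ∧
      FP μ N P W V
        ≤ Real.exp (∫ x, max (W x + Real.log (P x)) 0 ∂(Pmeas μ N P)) := by
  obtain ⟨hVint, hVexp, v, hvsymm, hvmeas, hVae⟩ := hV
  set ν := Pmeas μ N P with hν
  set M : (Fin N → Λ) → ℝ := fun x => max (W x + Real.log (P x)) 0 with hM
  -- ν is a probability measure
  have hνuniv : ν Set.univ = 1 := by
    rw [hν, Pmeas, withDensity_apply _ MeasurableSet.univ, setLIntegral_univ, hPprob]
  have hνprob : IsProbabilityMeasure ν := ⟨hνuniv⟩
  have hac : ν ≪ pm μ N := withDensity_absolutelyContinuous _ _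
  -- V is a.e.-measurable
  have hmSum : Measurable (mSum N m v) := by
    apply Finset.measurable_sum
    intro s _
    by_cases h : s.card = m
    · simp only [h, dif_pos]
      exact hvmeas.comp (measurable_pi_lambda _ fun i => measurable_pi_apply _)
    · simp only [h, dif_neg, not_false_iff]
      exact measurable_const
  have hVaemeas : AEMeasurable V (pm μ N) := ⟨mSum N m v, hmSum, hVae⟩
  have hPae : AEMeasurable (fun x => ENNReal.ofReal (P x)) (pm μ N) :=
    (ENNReal.measurable_ofReal.comp hPmeas).aemeasurable
  -- Z(V) is finite
  have hZne : ZE μ N W V ≠ ⊤ := by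
    have h1 := hVexp.2
    rw [HasFiniteIntegral] at h1
    have key : ZE μ N W V = ∫⁻ a, (‖Real.exp (-(V a))‖₊ : ℝ≥0∞) ∂(Wmeas μ N W) := by
      have haem : AEMeasurable (fun a => (‖Real.exp (-(V a))‖₊ : ℝ≥0∞)) (pm μ N) :=
        ((measurable_coe_nnreal_ennreal.comp measurable_nnnorm).comp
          Real.measurable_exp).comp_aemeasurable hVaemeas.neg
      have hWae : AEMeasurable (fun x => ENNReal.ofReal (Real.exp (-(W x)))) (pm μ N) :=
        (ENNReal.measurable_ofReal.comp (Real.measurable_exp.comp hWmeas.neg)).aemeasurable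
      rw [Wmeas, lintegral_withDensity_eq_lintegral_mul₀ hWae haem, ZE]
      refine lintegral_congr fun x => ?_
      simp only [Pi.mul_apply]
      rw [← enorm_eq_nnnorm, Real.enorm_eq_ofReal (Real.exp_nonneg _), ← ENNReal.ofReal_mul (Real.exp_nonneg _),
        ← Real.exp_add]
      congr 1
      ring
    rw [key]
    exact h1.ne
  -- Z(V) is positive
  have hpmne : pm μ N ≠ 0 := by
    intro h
    rw [h] at hPprob
    simp at hPprob
  have hZEmeas : AEMeasurable (fun x => ENNReal.ofReal (Real.exp (-(V x) - W x))) (pm μ N) :=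
    (ENNReal.measurable_ofReal.comp Real.measurable_exp).comp_aemeasurable
      (hVaemeas.neg.sub hWmeas.aemeasurable)
  have hZpos : 0 < ZE μ N W V := by
    rcases eq_zero_or_pos (ZE μ N W V) with h | h
    · exfalso
      rw [ZE, lintegral_eq_zero_iff' hZEmeas] at h
      have : ∀ᵐ x ∂(pm μ N), False := h.mono fun x hx => by
        simp only [Pi.zero_apply, ENNReal.ofReal_eq_zero] at hx
        exact absurd hx (not_le.mpr (Real.exp_pos _))
      rw [ae_iff] at this
      simp only [not_false_iff, Set.setOf_true] at this
      exact hpmne (Measure.measure_univ_eq_zero.mp this)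
    · exact h
  have hZfun : 0 < Zfun μ N W V := ENNReal.toReal_pos hZpos.ne' hZne
  have hFPpos : 0 < FP μ N P W V := div_pos (Real.exp_pos _) hZfun
  refine ⟨hFPpos, ?_⟩
  -- the function g = -V - M
  set g : (Fin N → Λ) → ℝ := fun x => -V x - M x with hg
  have hgint : Integrable g ν := (hVint.neg).sub hWlogP
  -- pointwise bound: exp(g x) * P x ≤ exp(-V x - W x) a.e.
  have hptwise : ∀ᵐ x ∂(pm μ N),
      ENNReal.ofReal (Real.exp (g x)) * ENNReal.ofReal (P x)
        ≤ ENNReal.ofReal (Real.exp (-(V x) - W x)) := by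
    filter_upwards [hPpos] with x hx
    rw [← ENNReal.ofReal_mul (Real.exp_nonneg _)]
    apply ENNReal.ofReal_le_ofReal
    have : Real.exp (g x) * P x = Real.exp (g x + Real.log (P x)) := by
      rw [Real.exp_add, Real.exp_log hx]
    rw [this]
    apply Real.exp_le_exp.mpr
    have hle : W x + Real.log (P x) ≤ M x := le_max_left _ _
    simp only [hg]
    linarith
  -- lintegral of exp∘g over ν is ≤ ZE
  have hgaemeas : AEMeasurable g (pm μ N) :=
    (hVaemeas.neg.sub ((hWmeas.aemeasurable.add
      (Real.measurable_log.comp hPmeas).aemeasurable).max aemeasurable_const))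
  have hexpg : AEMeasurable (fun x => ENNReal.ofReal (Real.exp (g x))) (pm μ N) :=
    (ENNReal.measurable_ofReal.comp Real.measurable_exp).comp_aemeasurable hgaemeas
  have hlint : ∫⁻ x, ENNReal.ofReal (Real.exp (g x)) ∂ν ≤ ZE μ N W V := by
    rw [hν, Pmeas, lintegral_withDensity_eq_lintegral_mul₀ hPae hexpg]
    refine le_trans (lintegral_mono_ae (hptwise.mono fun x hx => ?_)) le_rfl
    simpa [mul_comm] using hx
  -- exp ∘ g is integrable w.r.t. ν
  have hexpgint : Integrable (fun x => Real.exp (g x)) ν := by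
    constructor
    · exact ((Real.measurable_exp.comp_aemeasurable (hgaemeas.mono_ac hac))).aestronglyMeasurable
    · rw [HasFiniteIntegral]
      refine lt_of_le_of_lt (le_of_eq (lintegral_congr fun x => ?_))
        (lt_of_le_of_lt hlint hZne.lt_top)
      exact Real.enorm_eq_ofReal (Real.exp_nonneg _)
  -- Jensen
  have hjensen : Real.exp (∫ x, g x ∂ν) ≤ ∫ x, Real.exp (g x) ∂ν := by
    have := convexOn_exp.map_integral_le Real.continuous_exp.continuousOn isClosed_univ
      (Filter.Eventually.of_forall fun x => Set.mem_univ (g x)) hgint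
      (hexpgint.congr (Filter.Eventually.of_forall fun x => rfl))
    exact this
  -- ∫ exp g dν ≤ Zfun
  have hintZ : ∫ x, Real.exp (g x) ∂ν ≤ Zfun μ N W V := by
    rw [integral_eq_lintegral_of_nonneg_ae
      (Filter.Eventually.of_forall fun x => Real.exp_nonneg _)
      ((Real.measurable_exp.comp_aemeasurable (hgaemeas.mono_ac hac))).aestronglyMeasurable]
    exact ENNReal.toReal_mono hZne hlint
  -- combine
  have hgval : ∫ x, g x ∂ν = -(∫ x, V x ∂ν) - ∫ x, M x ∂ν := by
    have h2 := integral_sub hVint.neg hWlogP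
    simpa [integral_neg] using h2
  rw [FP, div_le_iff₀ hZfun]
  calc Real.exp (-∫ x, V x ∂ν)
      = Real.exp (∫ x, M x ∂ν) * Real.exp (∫ x, g x ∂ν) := by
        rw [← Real.exp_add, hgval]; ring_nf
    _ ≤ Real.exp (∫ x, M x ∂ν) * Zfun μ N W V := by
        apply mul_le_mul_of_nonneg_left (le_trans hjensen hintZ) (Real.exp_nonneg _)


end
end

section
/- Assume (W + log P)₊ ∈ L¹(Λ^N; P d^N x). Let U be a measurable extended-real-valued function on Λ^N with ∫_{Λ^N} e^{−U−W} d^N x = 1. Then the negative part U₋ = max(−U, 0) belongs to L¹(Λ^N; P d^N x). -/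
open MeasureTheory Real Filter
open scoped ENNReal

noncomputable section

variable {Λ : Type*} [MeasurableSpace Λ]

/-- The image in `ℝ≥0∞` of the positive part of an extended real number. -/
def posE : EReal → ℝ≥0∞
  | ⊥ => 0
  | ⊤ => ⊤
  | (x : ℝ) => ENNReal.ofReal x

/-- Assume `(W + log P)₊ ∈ L¹(Λ^N; P d^N x)`.  If `U` is a measurable
extended-real-valued function with `∫ e^{-U-W} d^N x = 1`, then the negative part
`U₋ = max(-U, 0)` belongs to `L¹(Λ^N; P d^N x)`. -/
theorem statement9 (μ : Measure Λ) [SigmaFinite μ] (hμ : μ ≠ 0)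
    (N : ℕ) (hN : 2 ≤ N)
    (P W : (Fin N → Λ) → ℝ) (hPmeas : Measurable P)
    (hPprob : ∫⁻ x, ENNReal.ofReal (P x) ∂(pm μ N) = 1)
    (hPpos : ∀ᵐ x ∂(pm μ N), 0 < P x)
    (hWmeas : Measurable W)
    (hWlogP : Integrable (fun x => max (W x + Real.log (P x)) 0) (Pmeas μ N P))
    (U : (Fin N → Λ) → EReal) (hUmeas : Measurable U)
    (hUnorm : ∫⁻ x, EReal.exp (-(U x) + ((-(W x) : ℝ) : EReal)) ∂(pm μ N) = 1) :
    ∫⁻ x, posE (-(U x)) ∂(Pmeas μ N P) ≠ ⊤ := by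
  classical
  set ν := pm μ N with hν
  -- auxiliary facts about posE
  have posE_bot : posE ⊥ = 0 := rfl
  have posE_coe : ∀ r : ℝ, posE (r : EReal) = ENNReal.ofReal r := fun r => rfl
  -- measurability
  have hPE : Measurable fun x => ENNReal.ofReal (P x) := hPmeas.ennreal_ofReal
  have hexpm : Measurable (EReal.exp) := EReal.exp_monotone.measurable
  have hnegm : Measurable (fun t : EReal => -t) :=
    EReal.measurable_of_measurable_real
      (by simpa [← EReal.coe_neg] using measurable_neg.coe_real_ereal)
  set f1 : (Fin N → Λ) → ℝ≥0∞ :=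
    fun x => EReal.exp (-(U x)) * ENNReal.ofReal (Real.exp (-(W x))) with hf1
  have hf1meas : Measurable f1 :=
    (hexpm.comp (hnegm.comp hUmeas)).mul (hWmeas.neg.exp.ennreal_ofReal)
  have hrw : (fun x => EReal.exp (-(U x) + ((-(W x) : ℝ) : EReal))) = f1 := by
    funext x
    rw [hf1, EReal.exp_add, EReal.exp_coe]
  have hf1int : ∫⁻ x, f1 x ∂ν = 1 := by rw [← hrw]; exact hUnorm
  have hf1ne : ∫⁻ x, f1 x ∂ν ≠ ⊤ := by rw [hf1int]; exact ENNReal.one_ne_top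
  have haefin : ∀ᵐ x ∂ν, f1 x < ⊤ := ae_lt_top hf1meas hf1ne
  set f2 : (Fin N → Λ) → ℝ≥0∞ :=
    fun x => ENNReal.ofReal (P x) * ENNReal.ofReal (max (W x + Real.log (P x)) 0) with hf2
  have hmaxmeas : Measurable fun x => ENNReal.ofReal (max (W x + Real.log (P x)) 0) :=
    ((hWmeas.add (hPmeas.log)).max measurable_const).ennreal_ofReal
  -- pointwise bound
  have hbound : ∀ᵐ x ∂ν,
      ENNReal.ofReal (P x) * posE (-(U x)) ≤ f1 x + f2 x := by
    filter_upwards [hPpos, haefin] with x hP hfin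
    have hnetop : -(U x) ≠ ⊤ := by
      intro h
      have htop : f1 x = ⊤ := by
        simp only [hf1, h, EReal.exp_top]
        rw [ENNReal.top_mul]
        simp [Real.exp_pos]
      rw [htop] at hfin
      exact lt_irrefl _ hfin
    by_cases hbot : -(U x) = ⊥
    · rw [hbot, posE_bot, mul_zero]; exact zero_le
    · set r : ℝ := (-(U x)).toReal with hr
      have hcr : ((r : ℝ) : EReal) = -(U x) := EReal.coe_toReal hnetop hbot
      have key : max r 0 * P x ≤ Real.exp r * Real.exp (-(W x))
          + max (W x + Real.log (P x)) 0 * P x := by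
        have h1 : max r 0 ≤ max (r - W x - Real.log (P x)) 0
            + max (W x + Real.log (P x)) 0 :=
          max_le (by nlinarith [le_max_left (r - W x - Real.log (P x)) 0,
            le_max_left (W x + Real.log (P x)) 0]) (by positivity)
        have h2 : max (r - W x - Real.log (P x)) 0 ≤ Real.exp (r - W x - Real.log (P x)) :=
          max_le (by linarith [Real.add_one_le_exp (r - W x - Real.log (P x))])
            (Real.exp_pos _).le
        have h3 : Real.exp (r - W x - Real.log (P x)) * P x
            = Real.exp r * Real.exp (-(W x)) := by
          rw [show r - W x - Real.log (P x) = (r - W x) + (-(Real.log (P x))) by ring,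
            Real.exp_add, Real.exp_neg, Real.exp_log hP, Real.exp_sub, Real.exp_neg]
          field_simp
        have h4 : max r 0 * P x ≤ (Real.exp (r - W x - Real.log (P x))
            + max (W x + Real.log (P x)) 0) * P x :=
          mul_le_mul_of_nonneg_right (h1.trans (add_le_add_left h2 _)) hP.le
        calc max r 0 * P x ≤ _ := h4
          _ = Real.exp r * Real.exp (-(W x)) + max (W x + Real.log (P x)) 0 * P x := by
              rw [add_mul, h3]
      have hcr' : -(U x) = ((r : ℝ) : EReal) := hcr.symm
      simp only [hf1, hf2, hcr', posE_coe, EReal.exp_coe]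
      calc ENNReal.ofReal (P x) * ENNReal.ofReal r
          ≤ ENNReal.ofReal (P x) * ENNReal.ofReal (max r 0) := by
            exact mul_le_mul_right (ENNReal.ofReal_le_ofReal (le_max_left _ _)) _
        _ = ENNReal.ofReal (max r 0 * P x) := by
            rw [mul_comm, ← ENNReal.ofReal_mul (le_max_right r 0)]
        _ ≤ ENNReal.ofReal (Real.exp r * Real.exp (-(W x))
              + max (W x + Real.log (P x)) 0 * P x) := ENNReal.ofReal_le_ofReal key
        _ = _ := by
            rw [ENNReal.ofReal_add (by positivity) (by positivity),
              ENNReal.ofReal_mul (Real.exp_nonneg _),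
              ENNReal.ofReal_mul (le_max_right _ 0), mul_comm (ENNReal.ofReal (max _ 0))]
  -- the lintegral over Pmeas
  have hmain : ∫⁻ x, posE (-(U x)) ∂(Pmeas μ N P)
      = ∫⁻ x, ENNReal.ofReal (P x) * posE (-(U x)) ∂ν := by
    rw [Pmeas, hν]
    exact lintegral_withDensity_eq_lintegral_mul_non_measurable _ hPE
      (Eventually.of_forall fun x => ENNReal.ofReal_lt_top) _
  have hf2int : ∫⁻ x, f2 x ∂ν ≠ ⊤ := by
    have heq : ∫⁻ x, ENNReal.ofReal (max (W x + Real.log (P x)) 0) ∂(Pmeas μ N P)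
        = ∫⁻ x, f2 x ∂ν := by
      rw [Pmeas, hν]
      exact lintegral_withDensity_eq_lintegral_mul _ hPE hmaxmeas
    rw [← heq]
    have hle : ∫⁻ x, ENNReal.ofReal (max (W x + Real.log (P x)) 0) ∂(Pmeas μ N P)
        ≤ ∫⁻ x, (‖max (W x + Real.log (P x)) 0‖₊ : ℝ≥0∞) ∂(Pmeas μ N P) := by
      refine lintegral_mono fun x => ?_
      rw [← enorm_eq_nnnorm, Real.enorm_eq_ofReal_abs]
      exact ENNReal.ofReal_le_ofReal (le_abs_self _)
    exact ne_top_of_le_ne_top hWlogP.hasFiniteIntegral.ne hle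
  rw [hmain]
  have : ∫⁻ x, ENNReal.ofReal (P x) * posE (-(U x)) ∂ν ≤ ∫⁻ x, (f1 x + f2 x) ∂ν :=
    lintegral_mono_ae hbound
  rw [lintegral_add_left hf1meas, hf1int] at this
  exact ne_top_of_le_ne_top (by simp [hf2int, ENNReal.add_ne_top]) this


end
end

section
/- Let U, V ∈ V_{ρ^(m)}. Then for every ε > 0 there exists a bounded symmetric measurable function ξ : Λ^m → ℝ such that, with Ξ(x₁,…,x_N) = Σ_{1≤i₁<⋯<i_m≤N} ξ(x_{i₁},…,x_{i_m}), one has U + Ξ ∈ V_{ρ^(m)} and |F_P(V) − F_P(U + Ξ)| < ε. -/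
open MeasureTheory Real Filter
open scoped ENNReal

noncomputable section

variable {Λ : Type*} [MeasurableSpace Λ]

open scoped Topology

set_option linter.unusedSectionVars false
set_option linter.unusedVariables false
set_option maxHeartbeats 1000000

namespace S15

instance pm_sigmaFinite (μ : Measure Λ) [SigmaFinite μ] (k : ℕ) : SigmaFinite (pm μ k) := by
  unfold pm; infer_instance


lemma mSum_add {N m : ℕ} (v u : (Fin m → Λ) → ℝ) (x : Fin N → Λ) :
    mSum N m (fun y => v y + u y) x = mSum N m v x + mSum N m u x := by
  unfold mSum
  rw [← Finset.sum_add_distrib]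
  refine Finset.sum_congr rfl fun s hs => ?_
  have hc : s.card = m := (Finset.mem_powersetCard.mp hs).2
  simp [hc]

lemma mSum_mono {N m : ℕ} {v u : (Fin m → Λ) → ℝ} (h : ∀ y, v y ≤ u y) (x : Fin N → Λ) :
    mSum N m v x ≤ mSum N m u x := by
  refine Finset.sum_le_sum fun s hs => ?_
  have hc : s.card = m := (Finset.mem_powersetCard.mp hs).2
  simp only [dif_pos hc]
  exact h _

lemma mSum_const {N m : ℕ} (r : ℝ) (x : Fin N → Λ) :
    mSum N m (fun _ => r) x
      = ((Finset.powersetCard m (Finset.univ : Finset (Fin N))).card : ℝ) * r := by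
  unfold mSum
  rw [Finset.sum_congr rfl (fun s hs => dif_pos (Finset.mem_powersetCard.mp hs).2),
    Finset.sum_const, nsmul_eq_mul]

lemma measurable_sel {N m : ℕ} (f : Fin m → Fin N) :
    Measurable (fun x : Fin N → Λ => fun i => x (f i)) :=
  measurable_pi_lambda _ fun i => measurable_pi_apply _

lemma measurable_mSum {N m : ℕ} {v : (Fin m → Λ) → ℝ} (hv : Measurable v) :
    Measurable (mSum N m v) := by
  unfold mSum
  refine Finset.measurable_sum _ fun s hs => ?_
  have hc : s.card = m := (Finset.mem_powersetCard.mp hs).2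
  simp only [dif_pos hc]
  exact hv.comp (measurable_sel _)

lemma measurePreserving_permComp (μ : Measure Λ) [SigmaFinite μ] {k : ℕ}
    (σ : Equiv.Perm (Fin k)) :
    MeasurePreserving (fun x : Fin k → Λ => x ∘ σ) (pm μ k) (pm μ k) := by
  have he : ⇑(MeasurableEquiv.piCongrLeft (fun _ : Fin k => Λ) σ.symm)
      = fun x : Fin k → Λ => x ∘ σ := by
    funext x
    funext b
    have h2 := MeasurableEquiv.piCongrLeft_apply_apply (σ.symm) (β := fun _ : Fin k => Λ) x (σ b)
    simpa using h2
  have h := MeasureTheory.measurePreserving_piCongrLeft (fun _ : Fin k => μ) σ.symm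
  rw [he] at h
  exact h

def finSumEquiv (N m : ℕ) (h : m ≤ N) : Fin m ⊕ Fin (N - m) ≃ Fin N :=
  finSumFinEquiv.trans (finCongr (by omega))

def glueEquiv (N m : ℕ) (h : m ≤ N) :
    ((Fin m → Λ) × (Fin (N - m) → Λ)) ≃ᵐ (Fin N → Λ) :=
  (MeasurableEquiv.sumPiEquivProdPi (fun _ : Fin m ⊕ Fin (N - m) => Λ)).symm.trans
    (MeasurableEquiv.piCongrLeft (fun _ : Fin N => Λ) (finSumEquiv N m h))

lemma glueEquiv_apply {N m : ℕ} (h : m ≤ N) (p : (Fin m → Λ) × (Fin (N - m) → Λ)) :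
    glueEquiv N m h p = glue h p.1 p.2 := by
  funext i
  obtain ⟨s, rfl⟩ := (finSumEquiv N m h).surjective i
  have h1 : glueEquiv N m h p (finSumEquiv N m h s)
      = (MeasurableEquiv.sumPiEquivProdPi (fun _ : Fin m ⊕ Fin (N - m) => Λ)).symm p s := by
    simp only [glueEquiv, MeasurableEquiv.trans_apply]
    exact MeasurableEquiv.piCongrLeft_apply_apply (finSumEquiv N m h) _ s
  rw [h1]
  rcases s with i | j
  · have h2 : (finSumEquiv N m h) (Sum.inl i) = Fin.castLE h i := by
      simp [finSumEquiv]
      ext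
      simp
    rw [h2]
    have h3 : Fin.cast (by omega : N = m + (N - m)) (Fin.castLE h i)
        = Fin.castAdd (N - m) i := by
      ext; simp
    show _ = glue h p.1 p.2 (Fin.castLE h i)
    unfold glue
    rw [h3, Fin.append_left]
    rfl
  · have h3 : Fin.cast (by omega : N = m + (N - m)) ((finSumEquiv N m h) (Sum.inr j))
        = Fin.natAdd m j := by
      ext; simp [finSumEquiv]
    show _ = glue h p.1 p.2 _
    unfold glue
    rw [h3, Fin.append_right]
    rfl

lemma glue_measurePreserving (μ : Measure Λ) [SigmaFinite μ] {N m : ℕ} (h : m ≤ N) :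
    MeasurePreserving (glueEquiv (Λ := Λ) N m h) ((pm μ m).prod (pm μ (N - m))) (pm μ N) := by
  have h1 := MeasureTheory.measurePreserving_sumPiEquivProdPi_symm
    (fun _ : Fin m ⊕ Fin (N - m) => μ)
  have h2 := MeasureTheory.measurePreserving_piCongrLeft (fun _ : Fin N => μ) (finSumEquiv N m h)
  exact h2.comp h1

lemma glue_castLE {N m : ℕ} (h : m ≤ N) (y : Fin m → Λ) (z : Fin (N - m) → Λ) (i : Fin m) :
    glue h y z (Fin.castLE h i) = y i := by
  unfold glue
  have h3 : Fin.cast (by omega : N = m + (N - m)) (Fin.castLE h i) = Fin.castAdd (N - m) i := by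
    ext; simp
  rw [h3, Fin.append_left]



lemma map_symm_withDensity {α β : Type*} [MeasurableSpace α] [MeasurableSpace β]
    (e : α ≃ᵐ β) (ν : Measure α) (f : β → ℝ≥0∞) (hf : Measurable f) :
    Measure.map e.symm ((Measure.map e ν).withDensity f)
      = ν.withDensity (fun a => f (e a)) := by
  ext s hs
  rw [Measure.map_apply e.symm.measurable hs, withDensity_apply _ (e.symm.measurable hs),
    withDensity_apply _ hs]
  rw [setLIntegral_map (e.symm.measurable hs) hf e.measurable]
  have hset : e ⁻¹' (e.symm ⁻¹' s) = s := by ext x; simp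
  rw [hset]

lemma map_fst_withDensity {α β : Type*} [MeasurableSpace α] [MeasurableSpace β]
    (ν₁ : Measure α) (ν₂ : Measure β) [SigmaFinite ν₁] [SigmaFinite ν₂]
    (g : α × β → ℝ≥0∞) (hg : Measurable g) :
    Measure.map Prod.fst ((ν₁.prod ν₂).withDensity g)
      = ν₁.withDensity (fun a => ∫⁻ b, g (a, b) ∂ν₂) := by
  ext s hs
  rw [Measure.map_apply measurable_fst hs, withDensity_apply _ (measurable_fst hs),
    withDensity_apply _ hs]
  rw [← lintegral_indicator (measurable_fst hs), ← lintegral_indicator hs]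
  rw [MeasureTheory.lintegral_prod _ ((hg.indicator (measurable_fst hs)).aemeasurable)]
  refine lintegral_congr fun a => ?_
  by_cases ha : a ∈ s
  · rw [Set.indicator_of_mem ha]
    refine lintegral_congr fun b => ?_
    exact Set.indicator_of_mem (by simpa using ha) g
  · rw [Set.indicator_of_notMem ha]
    have : ∀ b, (Prod.fst ⁻¹' s).indicator g (a, b) = 0 := fun b =>
      Set.indicator_of_notMem (by simpa using ha) g
    simp [this]

lemma exists_perm_comp {k n : ℕ} (f g : Fin k → Fin n) (hf : Function.Injective f)
    (hg : Function.Injective g) : ∃ σ : Equiv.Perm (Fin n), ∀ i, σ (f i) = g i := by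
  classical
  have hcard : Fintype.card ((Set.range f)ᶜ : Set (Fin n))
      = Fintype.card ((Set.range g)ᶜ : Set (Fin n)) := by
    rw [Fintype.card_compl_set, Fintype.card_compl_set,
      Set.card_range_of_injective hf, Set.card_range_of_injective hg]
  let e₁ : (Set.range f) ≃ (Set.range g) :=
    (Equiv.ofInjective f hf).symm.trans (Equiv.ofInjective g hg)
  let e₂ : ((Set.range f)ᶜ : Set (Fin n)) ≃ ((Set.range g)ᶜ : Set (Fin n)) :=
    Fintype.equivOfCardEq hcard
  refine ⟨(Equiv.sumCompl (· ∈ Set.range f)).symm.trans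
    ((e₁.sumCongr e₂).trans (Equiv.sumCompl (· ∈ Set.range g))), fun i => ?_⟩
  have h1 : (Equiv.sumCompl (· ∈ Set.range f)).symm (f i)
      = Sum.inl ⟨f i, ⟨i, rfl⟩⟩ := by
    rw [Equiv.symm_apply_eq]
    simp
  have h2 : ∀ (hmem : f i ∈ Set.range f), e₁ ⟨f i, hmem⟩ = ⟨g i, ⟨i, rfl⟩⟩ := by
    intro hmem
    have h3 : (⟨f i, hmem⟩ : Set.range f) = Equiv.ofInjective f hf i := Subtype.ext rfl
    simp only [e₁, Equiv.trans_apply, h3, Equiv.symm_apply_apply]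
    rfl
  rw [Equiv.trans_apply, Equiv.trans_apply, h1]
  simp only [Equiv.sumCongr, Equiv.coe_fn_mk, Sum.map_inl]
  exact congrArg Subtype.val (h2 _)



section ZStuff

variable (μ : Measure Λ) [SigmaFinite μ] {N : ℕ}

lemma pm_ne_zero (hμ : μ ≠ 0) (k : ℕ) : pm μ k Set.univ ≠ 0 := by
  unfold pm
  rw [Measure.pi_univ]
  refine Finset.prod_ne_zero_iff.mpr fun i _ => ?_
  exact fun h => hμ (Measure.measure_univ_eq_zero.mp h)

lemma ZE_congr (W : (Fin N → Λ) → ℝ) {f g : (Fin N → Λ) → ℝ} (h : f =ᵐ[pm μ N] g) :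
    ZE μ N W f = ZE μ N W g :=
  lintegral_congr_ae (h.mono fun x hx => by dsimp only; rw [hx])

lemma FP_congr (P W : (Fin N → Λ) → ℝ) {f g : (Fin N → Λ) → ℝ} (h : f =ᵐ[pm μ N] g) :
    FP μ N P W f = FP μ N P W g := by
  unfold FP Zfun
  have hPae : Pmeas μ N P ≪ pm μ N := withDensity_absolutelyContinuous _ _
  rw [ZE_congr μ W h, integral_congr_ae (hPae.ae_eq h)]

lemma ZE_ne_top (W : (Fin N → Λ) → ℝ) (hWmeas : Measurable W) (V : (Fin N → Λ) → ℝ)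
    (hV : Integrable (fun x => Real.exp (-(V x))) (Wmeas μ N W)) :
    ZE μ N W V ≠ ∞ := by
  have h1 : ∫⁻ x, ‖Real.exp (-(V x))‖ₑ ∂(Wmeas μ N W) ≠ ∞ := hV.2.ne
  rw [show Wmeas μ N W = (pm μ N).withDensity
      (fun x => ENNReal.ofReal (Real.exp (-(W x)))) from rfl] at h1
  rw [lintegral_withDensity_eq_lintegral_mul₀'
    (show AEMeasurable (fun x => ENNReal.ofReal (Real.exp (-(W x)))) (pm μ N) from (hWmeas.neg.exp).ennreal_ofReal.aemeasurable) hV.1.enorm] at h1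
  have h2 : ZE μ N W V = ∫⁻ a, ((fun x => ENNReal.ofReal (Real.exp (-(W x))))
      * fun x => ‖Real.exp (-(V x))‖ₑ) a ∂(pm μ N) := by
    unfold ZE
    refine lintegral_congr fun x => ?_
    simp only [Pi.mul_apply]
    rw [Real.enorm_eq_ofReal (Real.exp_pos _).le, ← ENNReal.ofReal_mul (Real.exp_pos _).le,
      ← Real.exp_add]
    ring_nf
  rw [h2]
  exact h1

lemma ZE_pos (hμ : μ ≠ 0) (W : (Fin N → Λ) → ℝ) (hWmeas : Measurable W)
    (T : (Fin N → Λ) → ℝ) (hT : Measurable T) : ZE μ N W T ≠ 0 := by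
  have hm : Measurable fun x => ENNReal.ofReal (Real.exp (-(T x) - W x)) :=
    ((hT.neg.sub hWmeas).exp).ennreal_ofReal
  have hsupp : Function.support (fun x => ENNReal.ofReal (Real.exp (-(T x) - W x)))
      = Set.univ := by
    ext x
    simp only [Function.mem_support, Set.mem_univ, iff_true]
    exact (ENNReal.ofReal_pos.mpr (Real.exp_pos _)).ne'
  have := (lintegral_pos_iff_support hm).mpr (by
    rw [hsupp]
    exact lt_of_le_of_ne zero_le (Ne.symm (pm_ne_zero μ hμ N)))
  exact this.ne'

end ZStuff

section PStuff

variable (μ : Measure Λ) [SigmaFinite μ] {N m : ℕ} (hmN : m ≤ N) (P : (Fin N → Λ) → ℝ)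
  (hPmeas : Measurable P)
  (hPprob : ∫⁻ x, ENNReal.ofReal (P x) ∂(pm μ N) = 1)
  (hPpos : ∀ᵐ x ∂(pm μ N), 0 < P x)
  (hPsymm : ∀ σ : Equiv.Perm (Fin N), ∀ᵐ x ∂(pm μ N), P (x ∘ σ) = P x)

include hPmeas hPprob hPpos hPsymm

lemma Pmeas_map_perm (σ : Equiv.Perm (Fin N)) :
    Measure.map (fun x : Fin N → Λ => x ∘ σ) (Pmeas μ N P) = Pmeas μ N P := by
  set e := MeasurableEquiv.piCongrLeft (fun _ : Fin N => Λ) σ.symm with he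
  have hecoe : ⇑e = fun x : Fin N → Λ => x ∘ σ := by
    funext x
    funext b
    have h2 := MeasurableEquiv.piCongrLeft_apply_apply (σ.symm) (β := fun _ : Fin N => Λ) x (σ b)
    simpa using h2
  have hsymm : ⇑e.symm = fun x : Fin N → Λ => x ∘ ⇑σ.symm := by
    funext x
    apply e.injective
    rw [MeasurableEquiv.apply_symm_apply, hecoe]
    funext b
    simp
  have hmapsymm : Measure.map (⇑e.symm) (pm μ N) = pm μ N := by
    rw [hsymm]
    exact (measurePreserving_permComp μ σ.symm).map_eq
  have key := map_symm_withDensity (e := e.symm) (ν := pm μ N)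
    (f := fun x => ENNReal.ofReal (P x)) hPmeas.ennreal_ofReal
  rw [MeasurableEquiv.symm_symm, hmapsymm] at key
  rw [show Pmeas μ N P = (pm μ N).withDensity (fun x => ENNReal.ofReal (P x)) from rfl,
    ← hecoe, key]
  rw [show (fun a => ENNReal.ofReal (P (e.symm a)))
      = fun a : Fin N → Λ => ENNReal.ofReal (P (a ∘ ⇑σ.symm)) by rw [hsymm]]
  exact withDensity_congr_ae ((hPsymm σ.symm).mono fun x hx => by dsimp only; rw [hx])

lemma rho_ae :
    (fun y => ENNReal.ofReal (rho μ N m hmN P y))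
      =ᵐ[pm μ m] fun y => ∫⁻ z, ENNReal.ofReal (P (glue hmN y z)) ∂(pm μ (N - m)) := by
  have hmp := glue_measurePreserving μ hmN
  have hPE : Measurable fun p : (Fin m → Λ) × (Fin (N - m) → Λ) => P (glue hmN p.1 p.2) := by
    have hh : (fun p : (Fin m → Λ) × (Fin (N - m) → Λ) => P (glue hmN p.1 p.2))
        = P ∘ ⇑(glueEquiv N m hmN) := by
      funext p; rw [Function.comp_apply, glueEquiv_apply]
    rw [hh]; exact hPmeas.comp (glueEquiv N m hmN).measurable
  have h1 : ∫⁻ p, ENNReal.ofReal (P (glue hmN p.1 p.2)) ∂((pm μ m).prod (pm μ (N - m))) = 1 := by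
    have h0 : ∫⁻ a, ENNReal.ofReal (P ((glueEquiv N m hmN) a)) ∂((pm μ m).prod (pm μ (N - m)))
        = ∫⁻ b, ENNReal.ofReal (P b) ∂(pm μ N) :=
      hmp.lintegral_comp (f := fun x => ENNReal.ofReal (P x)) hPmeas.ennreal_ofReal
    rw [hPprob] at h0
    rw [← h0]
    refine lintegral_congr fun p => ?_
    rw [glueEquiv_apply]
  have h2 : ∀ᵐ y ∂pm μ m,
      ∫⁻ z, ENNReal.ofReal (P (glue hmN y z)) ∂pm μ (N - m) < ∞ := by
    refine ae_lt_top (hPE.ennreal_ofReal.lintegral_prod_right') ?_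
    rw [← MeasureTheory.lintegral_prod _ hPE.ennreal_ofReal.aemeasurable, h1]
    exact ENNReal.one_ne_top
  have h3 : ∀ᵐ p ∂((pm μ m).prod (pm μ (N - m))), 0 < P (glue hmN p.1 p.2) := by
    have hset : MeasurableSet {x : Fin N → Λ | 0 < P x} :=
      measurableSet_lt measurable_const hPmeas
    have h3a := hPpos
    rw [← hmp.map_eq] at h3a
    have h4 := (ae_map_iff (glueEquiv N m hmN).measurable.aemeasurable hset).mp h3a
    filter_upwards [h4] with p hp
    rwa [glueEquiv_apply] at hp
  have h5 := Measure.ae_ae_of_ae_prod h3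
  filter_upwards [h2, h5] with y hfin hpos
  have hmeaz : Measurable (fun z => P (glue hmN y z)) := by
    have hh : (fun z => P (glue hmN y z))
        = fun z => P (glueEquiv N m hmN (y, z)) := by
      funext z; rw [glueEquiv_apply]
    rw [hh]
    exact hPmeas.comp ((glueEquiv N m hmN).measurable.comp measurable_prodMk_left)
  have hint : Integrable (fun z => P (glue hmN y z)) (pm μ (N - m)) := by
    refine ⟨hmeaz.aestronglyMeasurable, ?_⟩
    rw [hasFiniteIntegral_iff_ofReal (hpos.mono fun z hz => hz.le)]
    exact hfin
  have := MeasureTheory.ofReal_integral_eq_lintegral_ofReal hint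
    (hpos.mono fun z hz => hz.le)
  simpa [rho] using this

lemma rhomeas_eq_map :
    rhomeas μ N m hmN P
      = Measure.map (fun x : Fin N → Λ => fun i : Fin m => x (Fin.castLE hmN i))
        (Pmeas μ N P) := by
  set E := glueEquiv (Λ := Λ) N m hmN with hE
  have hmp := glue_measurePreserving μ hmN
  have hsel : (fun x : Fin N → Λ => fun i : Fin m => x (Fin.castLE hmN i))
      = Prod.fst ∘ ⇑E.symm := by
    funext x
    obtain ⟨p, rfl⟩ := E.surjective x
    rw [Function.comp_apply, MeasurableEquiv.symm_apply_apply]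
    funext i
    have : E p = glue hmN p.1 p.2 := glueEquiv_apply hmN p
    rw [this]
    exact glue_castLE hmN p.1 p.2 i
  have hPm : Pmeas μ N P = (Measure.map (⇑E) ((pm μ m).prod (pm μ (N - m)))).withDensity
      (fun x => ENNReal.ofReal (P x)) := by
    rw [hmp.map_eq]; rfl
  rw [hsel, hPm, ← Measure.map_map measurable_fst E.symm.measurable]
  rw [map_symm_withDensity E _ _ hPmeas.ennreal_ofReal]
  have hgE : Measurable fun a : (Fin m → Λ) × (Fin (N - m) → Λ) => ENNReal.ofReal (P (E a)) :=
    (hPmeas.comp E.measurable).ennreal_ofReal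
  rw [map_fst_withDensity _ _ _ hgE]
  have hh : (fun a : Fin m → Λ => ∫⁻ b, ENNReal.ofReal (P (E (a, b))) ∂(pm μ (N - m)))
      = fun a => ∫⁻ b, ENNReal.ofReal (P (glue hmN a b)) ∂(pm μ (N - m)) := by
    funext a
    refine lintegral_congr fun b => ?_
    rw [show E (a, b) = glue hmN a b from glueEquiv_apply hmN (a, b)]
  rw [hh]
  exact withDensity_congr_ae (rho_ae μ hmN P hPmeas hPprob hPpos hPsymm)

lemma map_sel_eq_rhomeas (s : Finset (Fin N)) (hs : s.card = m) :
    Measure.map (fun x : Fin N → Λ => fun i => x (s.orderEmbOfFin hs i)) (Pmeas μ N P)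
      = rhomeas μ N m hmN P := by
  obtain ⟨σ, hσ⟩ := exists_perm_comp (fun i : Fin m => Fin.castLE hmN i)
    (fun i => s.orderEmbOfFin hs i) (Fin.castLE_injective hmN)
    (fun a b hab => (s.orderEmbOfFin hs).injective hab)
  have hcomp : (fun x : Fin N → Λ => fun i => x (s.orderEmbOfFin hs i))
      = (fun x : Fin N → Λ => fun i : Fin m => x (Fin.castLE hmN i))
        ∘ (fun x : Fin N → Λ => fun i : Fin N => x (σ i)) := by
    funext x
    funext i
    simp only [Function.comp_apply]
    exact (congrArg x (hσ i)).symm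
  have hperm : Measure.map (fun x : Fin N → Λ => fun i : Fin N => x (σ i)) (Pmeas μ N P)
      = Pmeas μ N P := Pmeas_map_perm μ P hPmeas hPprob hPpos hPsymm σ
  rw [hcomp, ← Measure.map_map (measurable_sel _) (measurable_sel _), hperm]
  exact (rhomeas_eq_map μ hmN P hPmeas hPprob hPpos hPsymm).symm

lemma isFiniteMeasure_Pmeas : IsFiniteMeasure (Pmeas μ N P) :=
  isFiniteMeasure_withDensity (by rw [hPprob]; exact ENNReal.one_ne_top)

lemma isFiniteMeasure_rhomeas : IsFiniteMeasure (rhomeas μ N m hmN P) := by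
  rw [rhomeas_eq_map μ hmN P hPmeas hPprob hPpos hPsymm]
  haveI := isFiniteMeasure_Pmeas μ P hPmeas hPprob hPpos hPsymm
  exact Measure.isFiniteMeasure_map _ _

lemma sel_facts (t : (Fin m → Λ) → ℝ) (htm : Measurable t)
    (hti : Integrable t (rhomeas μ N m hmN P)) (s : Finset (Fin N)) (hs : s.card = m) :
    Integrable (fun x => t (fun i => x (s.orderEmbOfFin hs i))) (Pmeas μ N P)
    ∧ ∫ x, t (fun i => x (s.orderEmbOfFin hs i)) ∂(Pmeas μ N P)
      = ∫ y, t y ∂(rhomeas μ N m hmN P) := by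
  have hmap := map_sel_eq_rhomeas μ hmN P hPmeas hPprob hPpos hPsymm s hs
  constructor
  · rw [← hmap] at hti
    exact (integrable_map_measure htm.aestronglyMeasurable
      (measurable_sel _).aemeasurable).mp hti
  · rw [← hmap, integral_map (measurable_sel _).aemeasurable htm.aestronglyMeasurable]

lemma mSum_facts (t : (Fin m → Λ) → ℝ) (htm : Measurable t)
    (hti : Integrable t (rhomeas μ N m hmN P)) :
    Integrable (mSum N m t) (Pmeas μ N P)
    ∧ ∫ x, mSum N m t x ∂(Pmeas μ N P)
      = ((Finset.powersetCard m (Finset.univ : Finset (Fin N))).card : ℝ)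
        * ∫ y, t y ∂(rhomeas μ N m hmN P) := by
  have hterm : ∀ s ∈ Finset.powersetCard m (Finset.univ : Finset (Fin N)),
      Integrable (fun x : Fin N → Λ =>
        if h : s.card = m then t (fun i => x (s.orderEmbOfFin h i)) else 0) (Pmeas μ N P) := by
    intro s hs
    have hc : s.card = m := (Finset.mem_powersetCard.mp hs).2
    simp only [dif_pos hc]
    exact (sel_facts μ hmN P hPmeas hPprob hPpos hPsymm t htm hti s hc).1
  constructor
  · unfold mSum
    exact integrable_finset_sum _ hterm
  · unfold mSum
    rw [integral_finset_sum _ hterm]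
    rw [Finset.sum_congr rfl (fun s hs => ?_), Finset.sum_const, nsmul_eq_mul]
    have hc : s.card = m := (Finset.mem_powersetCard.mp hs).2
    simp only [dif_pos hc]
    exact (sel_facts μ hmN P hPmeas hPprob hPpos hPsymm t htm hti s hc).2

lemma FP_tendsto (hμ : μ ≠ 0) (W : (Fin N → Λ) → ℝ) (hWmeas : Measurable W)
    (t : ℕ → (Fin m → Λ) → ℝ) (tl : (Fin m → Λ) → ℝ)
    (htm : ∀ k, Measurable (t k)) (htlm : Measurable tl)
    (hti : ∀ k, Integrable (t k) (rhomeas μ N m hmN P))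
    (htli : Integrable tl (rhomeas μ N m hmN P))
    (G : (Fin m → Λ) → ℝ) (hGi : Integrable G (rhomeas μ N m hmN P))
    (habs : ∀ k y, |t k y| ≤ G y)
    (hev : ∀ y, ∀ᶠ k in atTop, t k y = tl y)
    (D : (Fin N → Λ) → ℝ≥0∞) (hD : ∫⁻ x, D x ∂(pm μ N) ≠ ∞)
    (hdom : ∀ k x, ENNReal.ofReal (Real.exp (-(mSum N m (t k) x) - W x)) ≤ D x) :
    Tendsto (fun k => FP μ N P W (mSum N m (t k))) atTop
      (𝓝 (FP μ N P W (mSum N m tl))) := by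
  set c := ((Finset.powersetCard m (Finset.univ : Finset (Fin N))).card : ℝ) with hc
  have hmev : ∀ x : Fin N → Λ, ∀ᶠ k in atTop, mSum N m (t k) x = mSum N m tl x := by
    intro x
    have hall : ∀ᶠ k in atTop, ∀ s ∈ Finset.powersetCard m (Finset.univ : Finset (Fin N)),
        (if h : s.card = m then t k (fun i => x (s.orderEmbOfFin h i)) else 0)
        = (if h : s.card = m then tl (fun i => x (s.orderEmbOfFin h i)) else 0) := by
      rw [Filter.eventually_all_finset]
      intro s hs
      have hcard := (Finset.mem_powersetCard.mp hs).2
      filter_upwards [hev (fun i => x (s.orderEmbOfFin hcard i))] with k hk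
      rw [dif_pos hcard, dif_pos hcard, hk]
    filter_upwards [hall] with k hk
    exact Finset.sum_congr rfl hk
  have hZ : Tendsto (fun k => ZE μ N W (mSum N m (t k))) atTop
      (𝓝 (ZE μ N W (mSum N m tl))) := by
    unfold ZE
    refine tendsto_lintegral_filter_of_dominated_convergence D
      (Filter.Eventually.of_forall fun k =>
        (((measurable_mSum (htm k)).neg.sub hWmeas).exp).ennreal_ofReal)
      (Filter.Eventually.of_forall fun k => ae_of_all _ fun x => hdom k x) hD ?_
    refine ae_of_all _ fun x => ?_
    refine Tendsto.congr' ?_ tendsto_const_nhds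
    filter_upwards [hmev x] with k hk
    rw [hk]
  have hZlim_ne_top : ZE μ N W (mSum N m tl) ≠ ∞ := by
    refine ne_top_of_le_ne_top hD (lintegral_mono fun x => ?_)
    obtain ⟨k, hk⟩ := (hmev x).exists
    rw [← hk]
    exact hdom k x
  have hZlim_ne_zero : ZE μ N W (mSum N m tl) ≠ 0 :=
    ZE_pos μ hμ W hWmeas _ (measurable_mSum htlm)
  have hInt : Tendsto (fun k => ∫ y, t k y ∂(rhomeas μ N m hmN P)) atTop
      (𝓝 (∫ y, tl y ∂(rhomeas μ N m hmN P))) := by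
    refine MeasureTheory.tendsto_integral_filter_of_dominated_convergence G
      (Filter.Eventually.of_forall fun k => (htm k).aestronglyMeasurable)
      (Filter.Eventually.of_forall fun k => ae_of_all _ fun y => by
        rw [Real.norm_eq_abs]; exact habs k y) hGi ?_
    refine ae_of_all _ fun y => ?_
    refine Tendsto.congr' ?_ tendsto_const_nhds
    filter_upwards [hev y] with k hk
    rw [hk]
  have hfn : (fun k => FP μ N P W (mSum N m (t k)))
      = fun k => Real.exp (-(c * ∫ y, t k y ∂(rhomeas μ N m hmN P)))
          / (ZE μ N W (mSum N m (t k))).toReal := by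
    funext k
    simp only [FP, Zfun]
    rw [(mSum_facts μ hmN P hPmeas hPprob hPpos hPsymm (t k) (htm k) (hti k)).2]
  have hfl : FP μ N P W (mSum N m tl)
      = Real.exp (-(c * ∫ y, tl y ∂(rhomeas μ N m hmN P)))
          / (ZE μ N W (mSum N m tl)).toReal := by
    simp only [FP, Zfun]
    rw [(mSum_facts μ hmN P hPmeas hPprob hPpos hPsymm tl htlm htli).2]
  rw [hfn, hfl]
  refine Tendsto.div ?_ ?_ ?_
  · exact (Real.continuous_exp.tendsto _).comp ((tendsto_const_nhds.mul hInt).neg)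
  · exact (ENNReal.tendsto_toReal hZlim_ne_top).comp hZ
  · exact ENNReal.toReal_ne_zero.mpr ⟨hZlim_ne_zero, hZlim_ne_top⟩

end PStuff


end S15

/-- For `U, V ∈ V_{ρ^{(m)}}` and `ε > 0` there is a bounded symmetric
measurable `ξ : Λ^m → ℝ` such that, with `Ξ` the associated `m`-sum,
`U + Ξ ∈ V_{ρ^{(m)}}` and `|F_P(V) − F_P(U + Ξ)| < ε`. -/
theorem statement15 (μ : Measure Λ) [SigmaFinite μ] (hμ : μ ≠ 0)
    (N m : ℕ) (hN : 2 ≤ N) (hm : 1 ≤ m) (hmN : m ≤ N)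
    (P W : (Fin N → Λ) → ℝ) (hPmeas : Measurable P)
    (hPprob : ∫⁻ x, ENNReal.ofReal (P x) ∂(pm μ N) = 1)
    (hPpos : ∀ᵐ x ∂(pm μ N), 0 < P x)
    (hPsymm : ∀ σ : Equiv.Perm (Fin N), ∀ᵐ x ∂(pm μ N), P (x ∘ σ) = P x)
    (hWmeas : Measurable W)
    (U V : (Fin N → Λ) → ℝ)
    (hU : memVrho μ N m hmN P W U) (hV : memVrho μ N m hmN P W V)
    (ε : ℝ) (hε : 0 < ε) :
    ∃ ξ : (Fin m → Λ) → ℝ, IsSymm' m ξ ∧ Measurable ξ ∧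
      (∃ C : ℝ, ∀ y, |ξ y| ≤ C) ∧
      memVrho μ N m hmN P W (fun x => U x + mSum N m ξ x) ∧
      |FP μ N P W V - FP μ N P W (fun x => U x + mSum N m ξ x)| < ε := by
  
  classical
  obtain ⟨hUexp, vU, ⟨hvUsym, hvUmeas, hvUae⟩, hvUρ⟩ := hU
  obtain ⟨hVexp, vV, ⟨hvVsym, hvVmeas, hvVae⟩, hvVρ⟩ := hV
  haveI hfinρ : IsFiniteMeasure (rhomeas μ N m hmN P) :=
    S15.isFiniteMeasure_rhomeas μ hmN P hPmeas hPprob hPpos hPsymm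
  set w : (Fin m → Λ) → ℝ := fun y => vV y - vU y with hw
  have hwmeas : Measurable w := hvVmeas.sub hvUmeas
  have hwρ : Integrable w (rhomeas μ N m hmN P) := hvVρ.sub hvUρ
  set c : ℝ := ((Finset.powersetCard m (Finset.univ : Finset (Fin N))).card : ℝ) with hc
  set η : ℕ → (Fin m → Λ) → ℝ := fun b y => max (w y) (-(b : ℝ)) with hη
  set ξf : ℕ → ℕ → (Fin m → Λ) → ℝ := fun b a y => min (η b y) (a : ℝ) with hξf
  have hηmeas : ∀ b, Measurable (η b) := fun b => hwmeas.max measurable_const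
  have hξmeas : ∀ b a, Measurable (ξf b a) := fun b a => (hηmeas b).min measurable_const
  have hηabs : ∀ b y, |η b y| ≤ |w y| := by
    intro b y
    rw [abs_le]
    refine ⟨le_trans (neg_abs_le (w y)) (le_max_left _ _), ?_⟩
    exact max_le (le_abs_self _)
      (le_trans (neg_nonpos.mpr (Nat.cast_nonneg b)) (abs_nonneg (w y)))
  have hξabs : ∀ b a y, |ξf b a y| ≤ |w y| := by
    intro b a y
    rcases le_total (η b y) ((a : ℝ)) with hle | hle
    · rw [show ξf b a y = η b y from min_eq_left hle]
      exact hηabs b y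
    · rw [show ξf b a y = (a : ℝ) from min_eq_right hle,
        abs_of_nonneg (Nat.cast_nonneg a)]
      exact le_trans hle (le_trans (le_abs_self _) (hηabs b y))
  have hηρ : ∀ b, Integrable (η b) (rhomeas μ N m hmN P) := fun b =>
    Integrable.mono' hwρ.abs (hηmeas b).aestronglyMeasurable
      (ae_of_all _ fun y => by rw [Real.norm_eq_abs]; exact hηabs b y)
  have hξρ : ∀ b a, Integrable (ξf b a) (rhomeas μ N m hmN P) := fun b a =>
    Integrable.mono' hwρ.abs (hξmeas b a).aestronglyMeasurable
      (ae_of_all _ fun y => by rw [Real.norm_eq_abs]; exact hξabs b a y)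
  have hZU_ne_top : ZE μ N W U ≠ ∞ := S15.ZE_ne_top μ W hWmeas U hUexp
  have hZV_ne_top : ZE μ N W V ≠ ∞ := S15.ZE_ne_top μ W hWmeas V hVexp
  have hZEVm : ZE μ N W (mSum N m vV) = ZE μ N W V := (S15.ZE_congr μ W hvVae).symm
  have hZEUm : ZE μ N W (mSum N m vU) = ZE μ N W U := (S15.ZE_congr μ W hvUae).symm
  have hvsum : ∀ y, vU y + w y = vV y := fun y => by simp [hw]
  have hnegba : ∀ b a : ℕ, -(b : ℝ) ≤ (a : ℝ) := fun b a =>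
    le_trans (neg_nonpos.mpr (Nat.cast_nonneg b)) (Nat.cast_nonneg a)
  have hA : Tendsto (fun b : ℕ => FP μ N P W (mSum N m (fun y => vU y + η b y))) atTop
      (nhds (FP μ N P W (mSum N m vV))) := by
    refine S15.FP_tendsto μ hmN P hPmeas hPprob hPpos hPsymm hμ W hWmeas
      (fun b y => vU y + η b y) vV (fun b => hvUmeas.add (hηmeas b)) hvVmeas
      (fun b => hvUρ.add (hηρ b)) hvVρ (fun y => |vU y| + |w y|) (hvUρ.abs.add hwρ.abs)
      (fun b y => le_trans (abs_add_le _ _) (add_le_add le_rfl (hηabs b y)))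
      ?_ (fun x => ENNReal.ofReal (Real.exp (-(mSum N m vV x) - W x)))
      (by rw [show (∫⁻ x, ENNReal.ofReal (Real.exp (-(mSum N m vV x) - W x)) ∂pm μ N)
          = ZE μ N W (mSum N m vV) from rfl, hZEVm]; exact hZV_ne_top) ?_
    · intro y
      filter_upwards [tendsto_natCast_atTop_atTop.eventually_ge_atTop (|w y|)] with b hb
      have hby : -(b : ℝ) ≤ w y := by
        have := neg_abs_le (w y); linarith
      rw [show η b y = w y from max_eq_left hby, hvsum y]
    · intro b x
      refine ENNReal.ofReal_le_ofReal (Real.exp_le_exp.mpr ?_)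
      have hmono := S15.mSum_mono (v := vV) (u := fun y => vU y + η b y)
        (fun y => by rw [← hvsum y]; exact add_le_add le_rfl (le_max_left _ _)) x
      linarith
  have hB : ∀ b : ℕ, Tendsto
      (fun a : ℕ => FP μ N P W (mSum N m (fun y => vU y + ξf b a y))) atTop
      (nhds (FP μ N P W (mSum N m (fun y => vU y + η b y)))) := by
    intro b
    refine S15.FP_tendsto μ hmN P hPmeas hPprob hPpos hPsymm hμ W hWmeas
      (fun a y => vU y + ξf b a y) (fun y => vU y + η b y)
      (fun a => hvUmeas.add (hξmeas b a)) (hvUmeas.add (hηmeas b))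
      (fun a => hvUρ.add (hξρ b a)) (hvUρ.add (hηρ b))
      (fun y => |vU y| + |w y|) (hvUρ.abs.add hwρ.abs)
      (fun a y => le_trans (abs_add_le _ _) (add_le_add le_rfl (hξabs b a y)))
      ?_ (fun x => ENNReal.ofReal (Real.exp ((b : ℝ) * c))
        * ENNReal.ofReal (Real.exp (-(mSum N m vU x) - W x))) ?_ ?_
    · intro y
      filter_upwards [tendsto_natCast_atTop_atTop.eventually_ge_atTop (η b y)] with a ha
      rw [show ξf b a y = η b y from min_eq_left ha]
    · rw [lintegral_const_mul (f := fun x => ENNReal.ofReal (Real.exp (-(mSum N m vU x) - W x))) _ (((S15.measurable_mSum hvUmeas).neg.sub hWmeas).exp.ennreal_ofReal)]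
      rw [show (∫⁻ x, ENNReal.ofReal (Real.exp (-(mSum N m vU x) - W x)) ∂pm μ N)
          = ZE μ N W (mSum N m vU) from rfl, hZEUm]
      exact ENNReal.mul_ne_top ENNReal.ofReal_ne_top hZU_ne_top
    · intro a x
      rw [← ENNReal.ofReal_mul (Real.exp_pos _).le, ← Real.exp_add]
      refine ENNReal.ofReal_le_ofReal (Real.exp_le_exp.mpr ?_)
      have h1 : mSum N m (fun y => vU y + ξf b a y) x
          = mSum N m vU x + mSum N m (ξf b a) x := S15.mSum_add _ _ _
      have h2 : mSum N m (fun _ => -(b : ℝ)) x ≤ mSum N m (ξf b a) x :=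
        S15.mSum_mono (fun y => le_min (le_max_right _ _) (hnegba b a)) x
      have h3 : mSum N m (fun _ => -(b : ℝ)) x = c * (-(b : ℝ)) := by
        rw [S15.mSum_const, ← hc]
      rw [h1]
      linarith
  have hFPV : FP μ N P W V = FP μ N P W (mSum N m vV) := S15.FP_congr μ P W hvVae
  obtain ⟨b₀, hb₀⟩ := (Metric.tendsto_nhds.mp hA (ε / 2) (half_pos hε)).exists
  obtain ⟨a₀, ha₀⟩ := (Metric.tendsto_nhds.mp (hB b₀) (ε / 2) (half_pos hε)).exists
  set ξ : (Fin m → Λ) → ℝ := ξf b₀ a₀ with hξ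
  have hwsym : ∀ σ : Equiv.Perm (Fin m), ∀ x, w (x ∘ σ) = w x := by
    intro σ x
    simp only [hw]
    rw [hvVsym σ x, hvUsym σ x]
  have hξsym : IsSymm' m ξ := by
    intro σ x
    simp only [hξ, hξf, hη]
    rw [hwsym σ x]
  have hUΞae : (fun x => U x + mSum N m ξ x) =ᵐ[pm μ N]
      mSum N m (fun y => vU y + ξ y) := by
    filter_upwards [hvUae] with x hx
    rw [hx]
    exact (S15.mSum_add vU ξ x).symm
  have hΞlb : ∀ x, c * (-(b₀ : ℝ)) ≤ mSum N m ξ x := by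
    intro x
    have h2 : mSum N m (fun _ => -(b₀ : ℝ)) x ≤ mSum N m ξ x :=
      S15.mSum_mono (fun y => le_min (le_max_right _ _) (hnegba b₀ a₀)) x
    have h3 : mSum N m (fun _ => -(b₀ : ℝ)) x = c * (-(b₀ : ℝ)) := by
      rw [S15.mSum_const, ← hc]
    linarith
  have hmeasΞ : Measurable (mSum N m ξ) := S15.measurable_mSum (hξmeas b₀ a₀)
  have hexpint : Integrable (fun x => Real.exp (-(U x + mSum N m ξ x))) (Wmeas μ N W) := by
    refine Integrable.mono' (hUexp.mul_const (Real.exp (c * (b₀ : ℝ)))) ?_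
      (ae_of_all _ fun x => ?_)
    · have h1 : AEStronglyMeasurable
          (fun x => Real.exp (-(U x)) * Real.exp (-(mSum N m ξ x))) (Wmeas μ N W) :=
        hUexp.1.mul (hmeasΞ.neg.exp.aestronglyMeasurable)
      refine h1.congr (ae_of_all _ fun x => ?_)
      dsimp only
      rw [← Real.exp_add]
      ring_nf
    · rw [Real.norm_eq_abs, abs_of_nonneg (Real.exp_pos _).le]
      have hle : -(U x + mSum N m ξ x) ≤ -(U x) + c * (b₀ : ℝ) := by
        have := hΞlb x; linarith
      calc Real.exp (-(U x + mSum N m ξ x)) ≤ Real.exp (-(U x) + c * (b₀ : ℝ)) :=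
            Real.exp_le_exp.mpr hle
        _ = Real.exp (-(U x)) * Real.exp (c * (b₀ : ℝ)) := Real.exp_add _ _
  have hξbound : ∀ y, |ξ y| ≤ (a₀ : ℝ) + (b₀ : ℝ) := by
    intro y
    rw [abs_le]
    constructor
    · have h1 : -(b₀ : ℝ) ≤ ξ y := le_min (le_max_right _ _) (hnegba b₀ a₀)
      have h2 := Nat.cast_nonneg (α := ℝ) a₀
      simp only [hξ] at h1 ⊢
      linarith
    · have h2 : ξ y ≤ (a₀ : ℝ) := min_le_right _ _
      have h3 := Nat.cast_nonneg (α := ℝ) b₀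
      linarith
  have hmem : memVrho μ N m hmN P W (fun x => U x + mSum N m ξ x) := by
    refine ⟨hexpint, ⟨fun y => vU y + ξ y, ⟨?_, hvUmeas.add (hξmeas b₀ a₀), hUΞae⟩,
      hvUρ.add (hξρ b₀ a₀)⟩⟩
    intro σ x
    dsimp only
    rw [hvUsym σ x, hξsym σ x]
  have hFPUΞ : FP μ N P W (fun x => U x + mSum N m ξ x)
      = FP μ N P W (mSum N m (fun y => vU y + ξ y)) := S15.FP_congr μ P W hUΞae
  refine ⟨ξ, hξsym, hξmeas b₀ a₀, ⟨(a₀ : ℝ) + (b₀ : ℝ), hξbound⟩, hmem, ?_⟩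
  rw [hFPV, hFPUΞ]
  have hd1 : |FP μ N P W (mSum N m (fun y => vU y + η b₀ y))
      - FP μ N P W (mSum N m vV)| < ε / 2 := by
    have := hb₀; rwa [Real.dist_eq] at this
  have hd2 : |FP μ N P W (mSum N m (fun y => vU y + ξ y))
      - FP μ N P W (mSum N m (fun y => vU y + η b₀ y))| < ε / 2 := by
    have := ha₀; rwa [Real.dist_eq] at this
  calc |FP μ N P W (mSum N m vV) - FP μ N P W (mSum N m (fun y => vU y + ξ y))|
      ≤ |FP μ N P W (mSum N m vV) - FP μ N P W (mSum N m (fun y => vU y + η b₀ y))|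
        + |FP μ N P W (mSum N m (fun y => vU y + η b₀ y))
          - FP μ N P W (mSum N m (fun y => vU y + ξ y))| := abs_sub_le _ _ _
    _ < ε / 2 + ε / 2 := by
        refine add_lt_add ?_ ?_
        · rw [abs_sub_comm]; exact hd1
        · rw [abs_sub_comm]; exact hd2
    _ = ε := add_halves ε



end
end
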